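/- arXiv:2304.06498 — 2 statements merged into one kernel-verified Lean document; each statement's English description precedes it below -/
import Mathlib

section
/- Let M(x) be the number of moves until a terminal position when both players play the M-rule from x. Then M(x) = B(x) for every non-exceptional position x, and M(x) = B(x) + 1 for every exceptional position x. -/
/-- `z` is a basic position with parameter `b`: coordinate sum `k*b`, all coordinates
at most `b`, all coordinates even if `b` is even, exactly one even if `b` is odd. -/
def IsBasic (k : ℕ) (z : Fin (k+1) → ℕ) (b : ℕ) : Prop :=
  (∑ i, z i) = k * b ∧ (∀ i, z i ≤ b) ∧
    (Even b → ∀ i, Even (z i)) ∧ (Odd b → ∃! i, Even (z i))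

/-- `Pre k y x` means `y ⪯ x`: the sorted vector of `y` is componentwise ≤ that of `x`. -/
def Pre (k : ℕ) (y x : Fin (k+1) → ℕ) : Prop :=
  ∀ i, (y ∘ Tuple.sort y) i ≤ (x ∘ Tuple.sort x) i

/-- `BVal k x = max { b : some basic z with parameter b satisfies z ⪯ x }`. -/
noncomputable def BVal (k : ℕ) (x : Fin (k+1) → ℕ) : ℕ :=
  sSup {b | ∃ z, IsBasic k z b ∧ Pre k z x}

/-- A move in NIM(k+1,k): keep coordinate `i`, decrease every other (positive) coordinate by 1. -/
def MoveK (k : ℕ) (x y : Fin (k+1) → ℕ) : Prop :=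
  ∃ i, (∀ j, j ≠ i → 0 < x j) ∧ ∀ j, y j = if j = i then x j else x j - 1

/-- The M-move: keep a smallest even coordinate if one exists, otherwise keep a
largest coordinate; decrease the other k (positive) coordinates by 1. -/
def MMove (k : ℕ) (x y : Fin (k+1) → ℕ) : Prop :=
  ∃ i, (∀ j, j ≠ i → 0 < x j) ∧
    ((∃ j, Even (x j)) → Even (x i) ∧ ∀ j, Even (x j) → x i ≤ x j) ∧
    ((∀ j, Odd (x j)) → ∀ j, x j ≤ x i) ∧
    (∀ j, y j = if j = i then x j else x j - 1)

/-- Exceptional position: all coordinates odd, all `< m`, and `|x| = k*m + k - 1`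
for some even `m`. -/
def Exceptional (k : ℕ) (x : Fin (k+1) → ℕ) : Prop :=
  ∃ m, Even m ∧ (∀ i, Odd (x i)) ∧ (∀ i, x i < m) ∧ (∑ i, x i) = k * m + k - 1

/-- `MVal k x m`: playing the M-rule from `x`, the game ends after exactly `m` moves. -/
inductive MVal (k : ℕ) : (Fin (k+1) → ℕ) → ℕ → Prop
  | zero (x) : (¬ ∃ y, MoveK k x y) → MVal k x 0
  | succ (x y m) : MMove k x y → MVal k y m → MVal k x (m + 1)


namespace Stmt17Aux


lemma exists_sum_eq {ι : Type*} [DecidableEq ι] (s : Finset ι) (mm : ι → ℕ) (U : ℕ)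
    (hU : U ≤ ∑ j ∈ s, mm j) :
    ∃ u : ι → ℕ, (∀ j, u j ≤ mm j) ∧ ∑ j ∈ s, u j = U := by
  induction s using Finset.cons_induction generalizing U with
  | empty =>
    simp only [Finset.sum_empty, Nat.le_zero] at hU
    exact ⟨fun _ => 0, fun _ => Nat.zero_le _, by simp [hU]⟩
  | cons a s ha ih =>
    rw [Finset.sum_cons] at hU
    obtain ⟨u, hu, hsum⟩ := ih (U - min (mm a) U) (by omega)
    refine ⟨Function.update u a (min (mm a) U), ?_, ?_⟩
    · intro j
      rcases eq_or_ne j a with rfl | hj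
      · simp
      · simp [Function.update_of_ne hj]; exact hu j
    · rw [Finset.sum_cons, Function.update_self]
      have : ∑ j ∈ s, Function.update u a (min (mm a) U) j = ∑ j ∈ s, u j := by
        apply Finset.sum_congr rfl
        intro j hj
        exact Function.update_of_ne (by rintro rfl; exact ha hj) _ _
      rw [this, hsum]
      omega

lemma le_ef {v t : ℕ} (hv : Even v) (hvt : v ≤ t) : v ≤ 2 * (t / 2) := by
  rw [Nat.even_iff] at hv; omega

lemma le_of' {v t : ℕ} (hv : Odd v) (hvt : v ≤ t) : v ≤ 2 * ((t - 1) / 2) + 1 := by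
  rw [Nat.odd_iff] at hv; omega

/-- Characterization (sufficiency), even parameter. -/
lemma even_char {k b : ℕ} (w : Fin (k+1) → ℕ) (hb : Even b)
    (h : k * b ≤ ∑ j, 2 * (min (w j) b / 2)) :
    ∃ z, IsBasic k z b ∧ ∀ j, z j ≤ w j := by
  obtain ⟨c, rfl⟩ := hb
  have hS : ∑ j, 2 * (min (w j) (c+c) / 2) = 2 * ∑ j, (min (w j) (c+c) / 2) := by
    rw [Finset.mul_sum]
  have hkc : k * (c + c) = 2 * (k * c) := by ring
  have hU : k * c ≤ ∑ j, (min (w j) (c+c) / 2) := by omega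
  obtain ⟨u, hu, hsum⟩ := exists_sum_eq Finset.univ (fun j => min (w j) (c+c) / 2) (k * c) hU
  refine ⟨fun j => 2 * u j, ⟨?_, ?_, ?_, ?_⟩, ?_⟩
  · show ∑ j, 2 * u j = k * (c + c)
    rw [← Finset.mul_sum, hsum]; omega
  · intro j
    show 2 * u j ≤ c + c
    have h1 := hu j
    have h2 : min (w j) (c+c) ≤ c + c := min_le_right _ _
    omega
  · intro _ j; exact ⟨u j, by ring⟩
  · intro hob
    exact absurd ⟨c, rfl⟩ (Nat.not_even_iff_odd.mpr hob)
  · intro j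
    show 2 * u j ≤ w j
    have h1 := hu j
    have h2 : min (w j) (c+c) ≤ w j := min_le_left _ _
    omega

/-- Characterization (sufficiency), odd parameter, with pivot `p`. -/
lemma odd_char {k b : ℕ} (w : Fin (k+1) → ℕ) (hb : Odd b) (p : Fin (k+1))
    (hpos : ∀ j, j ≠ p → 1 ≤ min (w j) b)
    (h : k * b ≤ ∑ j, (if j = p then 2 * (min (w j) b / 2)
          else 2 * ((min (w j) b - 1) / 2) + 1)) :
    ∃ z, IsBasic k z b ∧ ∀ j, z j ≤ w j := by
  classical
  set mm : Fin (k+1) → ℕ := fun j => if j = p then min (w j) b / 2 else (min (w j) b - 1) / 2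
    with hmm
  set l : Fin (k+1) → ℕ := fun j => if j = p then 0 else 1 with hl
  have hcard : (Finset.univ.erase p).card = k := by
    rw [Finset.card_erase_of_mem (Finset.mem_univ p), Finset.card_univ, Fintype.card_fin]
    omega
  have hlsum : ∑ j, l j = k := by
    rw [← Finset.add_sum_erase _ l (Finset.mem_univ p)]
    have h1 : l p = 0 := by simp [hl]
    have h2 : ∑ j ∈ Finset.univ.erase p, l j = ∑ j ∈ Finset.univ.erase p, 1 := by
      apply Finset.sum_congr rfl
      intro j hj
      simp [hl, Finset.ne_of_mem_erase hj]
    rw [h1, h2, Finset.sum_const, hcard, smul_eq_mul, mul_one, zero_add]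
  have hsplit : ∀ j, (if j = p then 2 * (min (w j) b / 2)
      else 2 * ((min (w j) b - 1) / 2) + 1) = 2 * mm j + l j := by
    intro j; by_cases hj : j = p <;> simp [hmm, hl, hj]
  have hS : ∑ j, (if j = p then 2 * (min (w j) b / 2)
      else 2 * ((min (w j) b - 1) / 2) + 1) = 2 * (∑ j, mm j) + k := by
    rw [Finset.sum_congr rfl (fun j _ => hsplit j), Finset.sum_add_distrib, hlsum,
      Finset.mul_sum]
  rw [hS] at h
  obtain ⟨c, rfl⟩ := hb
  have hkbk : k * (2 * c + 1) = 2 * (k * c) + k := by ring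
  have hU : k * c ≤ ∑ j, mm j := by omega
  obtain ⟨u, hu, hsum⟩ := exists_sum_eq Finset.univ mm (k * c) hU
  have hdiv : (2 * c + 1) / 2 = c := by omega
  refine ⟨fun j => l j + 2 * u j, ⟨?_, ?_, ?_, ?_⟩, ?_⟩
  · show ∑ j, (l j + 2 * u j) = k * (2 * c + 1)
    rw [Finset.sum_add_distrib, hlsum, ← Finset.mul_sum, hsum]
    omega
  · intro j
    show l j + 2 * u j ≤ 2 * c + 1
    have h1 := hu j
    by_cases hj : j = p
    · have hle : min (w j) (2*c+1) ≤ 2*c+1 := min_le_right _ _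
      simp only [hmm, if_pos hj] at h1
      simp only [hl, if_pos hj]
      omega
    · have hle : min (w j) (2*c+1) ≤ 2*c+1 := min_le_right _ _
      have hp1 := hpos j hj
      simp only [hmm, if_neg hj] at h1
      simp only [hl, if_neg hj]
      omega
  · intro hbe
    rw [Nat.even_iff] at hbe; omega
  · intro _
    refine ⟨p, ⟨u p, by simp [hl]; ring⟩, ?_⟩
    intro j hj
    by_contra hjp
    have hlj : l j = 1 := by simp [hl, hjp]
    simp only [hlj, Nat.even_iff] at hj
    omega
  · intro j
    show l j + 2 * u j ≤ w j
    have h1 := hu j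
    by_cases hj : j = p
    · have hle : min (w j) (2*c+1) ≤ w j := min_le_left _ _
      simp only [hmm, if_pos hj] at h1
      simp only [hl, if_pos hj]
      omega
    · have hle : min (w j) (2*c+1) ≤ w j := min_le_left _ _
      have hp1 := hpos j hj
      simp only [hmm, if_neg hj] at h1
      simp only [hl, if_neg hj]
      omega



/-- pointwise domination implies sorted domination -/
lemma pre_of_forall_le {k : ℕ} {z x : Fin (k+1) → ℕ} (h : ∀ j, z j ≤ x j) : Pre k z x := by
  intro i
  set a := (x ∘ Tuple.sort x) i with ha
  have h1 : (i : ℕ) < Fintype.card {t // (x ∘ Tuple.sort x) t ≤ a} :=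
    by rw [Fintype.card_subtype]; exact (Tuple.lt_card_le_iff_apply_le_of_monotone (a := a) (j := i) (Tuple.monotone_sort x)).mpr le_rfl
  have h2 : Fintype.card {t // (x ∘ Tuple.sort x) t ≤ a}
      ≤ Fintype.card {s // z s ≤ a} := by
    apply Fintype.card_le_of_injective
      (fun t => ⟨Tuple.sort x t.1, le_trans (h _) t.2⟩)
    intro s t hst
    apply Subtype.ext
    have := congrArg Subtype.val hst
    simpa using (Tuple.sort x).injective (by simpa using this)
  have h3 : Fintype.card {s // z s ≤ a}
      = Fintype.card {t // (z ∘ Tuple.sort z) t ≤ a} :=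
    (Fintype.card_congr ((Tuple.sort z).subtypeEquiv (fun t => Iff.rfl))).symm
  have h4 := lt_of_lt_of_le h1 (le_of_le_of_eq h2 h3)
  rw [Fintype.card_subtype] at h4
  exact (Tuple.lt_card_le_iff_apply_le_of_monotone (a := a) (j := i) (Tuple.monotone_sort z)).mp h4

lemma isBasic_comp {k b : ℕ} {z : Fin (k+1) → ℕ} (σ : Equiv.Perm (Fin (k+1)))
    (h : IsBasic k z b) : IsBasic k (z ∘ σ) b := by
  obtain ⟨hsum, hle, hev, hodd⟩ := h
  refine ⟨by rw [← hsum]; exact Equiv.sum_comp σ z, fun i => hle _, fun hb i => hev hb _, ?_⟩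
  intro hb
  obtain ⟨i₀, hi₀, huniq⟩ := hodd hb
  refine ⟨σ.symm i₀, by simpa using hi₀, ?_⟩
  intro j hj
  have h1 : σ j = i₀ := huniq (σ j) hj
  have : σ j = σ (σ.symm i₀) := by rw [h1]; simp
  exact σ.injective this

/-- the set used in `BVal`, in pointwise form -/
def SB (k : ℕ) (x : Fin (k+1) → ℕ) : Set ℕ :=
  {b | ∃ z, IsBasic k z b ∧ ∀ j, z j ≤ x j}

lemma bval_eq_sSup_SB (k : ℕ) (x : Fin (k+1) → ℕ) : BVal k x = sSup (SB k x) := by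
  unfold BVal
  congr 1
  ext b
  constructor
  · rintro ⟨z, hz, hpre⟩
    -- from Pre obtain a permutation
    set σ : Equiv.Perm (Fin (k+1)) := (Tuple.sort x).symm.trans (Tuple.sort z) with hσ
    refine ⟨z ∘ σ, isBasic_comp σ hz, ?_⟩
    intro j
    have := hpre ((Tuple.sort x).symm j)
    simpa [hσ, Function.comp] using this
  · rintro ⟨z, hz, hle⟩
    exact ⟨z, hz, pre_of_forall_le hle⟩

lemma zero_mem_SB (k : ℕ) (x : Fin (k+1) → ℕ) : 0 ∈ SB k x := by
  refine ⟨fun _ => 0, ⟨by simp, fun _ => le_rfl, fun _ _ => Even.zero, ?_⟩, fun _ => Nat.zero_le _⟩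
  intro h
  exact absurd Even.zero (Nat.not_even_iff_odd.mpr h)

lemma bddAbove_SB (k : ℕ) (hk : 1 ≤ k) (x : Fin (k+1) → ℕ) : BddAbove (SB k x) := by
  refine ⟨∑ j, x j, ?_⟩
  rintro b ⟨z, ⟨hsum, _, _, _⟩, hle⟩
  calc b ≤ k * b := Nat.le_mul_of_pos_left b (by omega)
  _ = ∑ j, z j := hsum.symm
  _ ≤ ∑ j, x j := Finset.sum_le_sum (fun j _ => hle j)


section Helpers
variable {k : ℕ}

lemma split1 (f : Fin (k+1) → ℕ) (i : Fin (k+1)) :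
    ∑ j, f j = f i + ∑ j ∈ Finset.univ.erase i, f j :=
  (Finset.add_sum_erase _ f (Finset.mem_univ i)).symm

lemma split2 (f : Fin (k+1) → ℕ) {i p : Fin (k+1)} (hpi : p ≠ i) :
    ∑ j, f j = f i + f p + ∑ j ∈ (Finset.univ.erase i).erase p, f j := by
  rw [split1 f i, ← Finset.add_sum_erase _ f (Finset.mem_erase.mpr ⟨hpi, Finset.mem_univ p⟩)]
  ring

lemma split3 (f : Fin (k+1) → ℕ) {i p q : Fin (k+1)} (hpi : p ≠ i) (hqi : q ≠ i)
    (hqp : q ≠ p) :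
    ∑ j, f j = f i + f p + f q + ∑ j ∈ ((Finset.univ.erase i).erase p).erase q, f j := by
  rw [split2 f hpi, ← Finset.add_sum_erase _ f
    (Finset.mem_erase.mpr ⟨hqp, Finset.mem_erase.mpr ⟨hqi, Finset.mem_univ q⟩⟩)]
  ring

lemma card_erase1 (i : Fin (k+1)) : (Finset.univ.erase i).card = k := by
  rw [Finset.card_erase_of_mem (Finset.mem_univ i), Finset.card_univ, Fintype.card_fin]
  omega

lemma card_erase2 {i p : Fin (k+1)} (hpi : p ≠ i) :
    ((Finset.univ.erase i).erase p).card = k - 1 := by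
  rw [Finset.card_erase_of_mem (Finset.mem_erase.mpr ⟨hpi, Finset.mem_univ p⟩), card_erase1]

lemma card_erase3 {i p q : Fin (k+1)} (hpi : p ≠ i) (hqi : q ≠ i) (hqp : q ≠ p) :
    (((Finset.univ.erase i).erase p).erase q).card = k - 2 := by
  rw [Finset.card_erase_of_mem
    (Finset.mem_erase.mpr ⟨hqp, Finset.mem_erase.mpr ⟨hqi, Finset.mem_univ q⟩⟩),
    card_erase2 hpi]
  omega

lemma sum_add_card (s : Finset (Fin (k+1))) (g : Fin (k+1) → ℕ) :
    ∑ j ∈ s, (g j + 1) = (∑ j ∈ s, g j) + s.card := by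
  rw [Finset.sum_add_distrib, Finset.sum_const, smul_eq_mul, mul_one]

/-- If there is no legal move, then some two coordinates vanish. -/
lemma two_zeros {k : ℕ} {x : Fin (k+1) → ℕ} (hk : 1 ≤ k) (h : ¬ ∃ y, MoveK k x y) :
    ∃ j₁ j₂, j₁ ≠ j₂ ∧ x j₁ = 0 ∧ x j₂ = 0 := by
  classical
  by_contra hc
  push_neg at hc
  apply h
  by_cases hz : ∃ j, x j = 0
  · obtain ⟨j0, hj0⟩ := hz
    refine ⟨fun j => if j = j0 then x j else x j - 1, j0, ?_, fun j => rfl⟩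
    intro j hj
    rcases Nat.eq_zero_or_pos (x j) with h0 | h0
    · exact absurd hj0 (hc j j0 hj h0)
    · exact h0
  · push_neg at hz
    refine ⟨fun j => if j = 0 then x j else x j - 1, 0, ?_, fun j => rfl⟩
    intro j _
    exact Nat.pos_of_ne_zero (hz j)

end Helpers

section Exc
variable {k : ℕ} {x : Fin (k+1) → ℕ} {m : ℕ}

lemma exc_one_one (hk : 2 ≤ k) (hodd : ∀ j, Odd (x j)) (hlt : ∀ j, x j < m)
    (hsum : (∑ j, x j) = k * m + k - 1) :
    ∀ j₁ j₂, j₁ ≠ j₂ → x j₁ = 1 → x j₂ = 1 → False := by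
  intro j₁ j₂ hne h1 h2
  have hm2 : 2 ≤ m := by have := hlt j₁; omega
  have hsplit := split2 x (show j₂ ≠ j₁ from fun h => hne h.symm)
  have hrest : ∑ j ∈ (Finset.univ.erase j₁).erase j₂, x j
      ≤ ∑ _j ∈ (Finset.univ.erase j₁).erase j₂, (m-1) :=
    Finset.sum_le_sum (fun j _ => by have := hlt j; omega)
  rw [Finset.sum_const, smul_eq_mul, card_erase2 (show j₂ ≠ j₁ from fun h => hne h.symm)] at hrest
  obtain ⟨a, rfl⟩ : ∃ a, k = a + 2 := ⟨k - 2, by omega⟩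
  obtain ⟨c, rfl⟩ : ∃ c, m = c + 2 := ⟨m - 2, by omega⟩
  have e1 : (a+2) * (c+2) = a*c + 2*a + 2*c + 4 := by ring
  have e2 : (a+2-1) * (c+2-1) = a*c + a + c + 1 := by
    have : a+2-1 = a+1 := by omega
    rw [this]
    have : c+2-1 = c+1 := by omega
    rw [this]; ring
  omega

lemma exc_b_le (hk : 2 ≤ k) (hodd : ∀ j, Odd (x j)) (hlt : ∀ j, x j < m) (hm : Even m)
    (hsum : (∑ j, x j) = k * m + k - 1) {b : ℕ} (hb : b ∈ Stmt17Aux.SB k x) :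
    b ≤ m - 1 := by
  obtain ⟨z, ⟨hzsum, hzle, hev, _⟩, hle⟩ := hb
  have hm2 : 2 ≤ m := by have := hlt 0; have := Nat.odd_iff.mp (hodd 0); omega
  have hszx : ∑ j, z j ≤ ∑ j, x j := Finset.sum_le_sum (fun j _ => hle j)
  have hbm : b ≤ m := by
    by_contra hc
    have h1 : k * (m+1) ≤ k * b := Nat.mul_le_mul_left k (by omega)
    have h2 : k * (m+1) = k * m + k := by ring
    omega
  rcases Nat.lt_or_ge b m with h | h
  · omega
  · exfalso
    have hbem : b = m := by omega
    subst hbem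
    have hplus : ∀ j, z j + 1 ≤ x j := by
      intro j
      have h1 := Nat.even_iff.mp (hev hm j)
      have h2 := Nat.odd_iff.mp (hodd j)
      have := hle j
      omega
    have := Finset.sum_le_sum (fun j (_ : j ∈ Finset.univ) => hplus j)
    rw [sum_add_card, Finset.card_univ, Fintype.card_fin] at this
    omega

lemma exists_ne_fin (hk : 2 ≤ k) (i : Fin (k+1)) : ∃ p : Fin (k+1), p ≠ i := by
  haveI : Nontrivial (Fin (k+1)) := Fin.nontrivial_iff_two_le.mpr (by omega)
  obtain ⟨p, hp⟩ := exists_ne i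
  exact ⟨p, hp⟩

lemma exc_mem (hk : 2 ≤ k) {i : Fin (k+1)} {y : Fin (k+1) → ℕ}
    (hy : ∀ j, y j = if j = i then x j else x j - 1)
    (hmax : ∀ j, x j ≤ x i)
    (hodd : ∀ j, Odd (x j)) (hlt : ∀ j, x j < m) (hm : Even m)
    (hsum : (∑ j, x j) = k * m + k - 1) :
    m - 1 ∈ Stmt17Aux.SB k y := by
  classical
  have hm2 : 2 ≤ m := by have := hlt 0; have := Nat.odd_iff.mp (hodd 0); omega
  -- choose the pivot p ≠ i
  obtain ⟨p, hp, hno1⟩ : ∃ p, p ≠ i ∧ ∀ j, j ≠ i → j ≠ p → 3 ≤ x j := by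
    by_cases hex1 : ∃ j, j ≠ i ∧ x j = 1
    · obtain ⟨p, hp, hxp⟩ := hex1
      refine ⟨p, hp, fun j hji hjp => ?_⟩
      have h3 := Nat.odd_iff.mp (hodd j)
      rcases Nat.lt_or_ge (x j) 3 with h | h
      · exfalso
        have hj1 : x j = 1 := by omega
        exact exc_one_one hk hodd hlt hsum j p hjp hj1 hxp
      · exact h
    · push_neg at hex1
      obtain ⟨p, hp⟩ := exists_ne_fin hk i
      refine ⟨p, hp, fun j hji _ => ?_⟩
      have h3 := Nat.odd_iff.mp (hodd j)
      have := hex1 j hji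
      omega
  set z : Fin (k+1) → ℕ := fun j => if j = i then x j else if j = p then x j - 1 else x j - 2
    with hz
  have hzi : z i = x i := by simp [hz]
  have hzp : z p = x p - 1 := by simp [hz, hp]
  have hzrest : ∀ j, j ≠ i → j ≠ p → z j = x j - 2 := by
    intro j h1 h2; simp [hz, h1, h2]
  have hoddm : (m - 1) % 2 = 1 := by
    have := Nat.even_iff.mp hm; omega
  refine ⟨z, ⟨?_, ?_, ?_, ?_⟩, ?_⟩
  · -- sum
    have hsz := split2 z hp
    have hsx := split2 x hp
    have hrest : ∑ j ∈ (Finset.univ.erase i).erase p, x j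
        = (∑ j ∈ (Finset.univ.erase i).erase p, z j) + 2 * (k-1) := by
      have : ∀ j ∈ (Finset.univ.erase i).erase p, x j = z j + 2 := by
        intro j hj
        have hj1 := Finset.ne_of_mem_erase hj
        have hj2 := Finset.ne_of_mem_erase (Finset.mem_of_mem_erase hj)
        rw [hzrest j hj2 hj1]
        have := hno1 j hj2 hj1
        omega
      rw [Finset.sum_congr rfl this, Finset.sum_add_distrib, Finset.sum_const,
        smul_eq_mul, card_erase2 hp]
      ring
    have hxp1 : 1 ≤ x p := by have := Nat.odd_iff.mp (hodd p); omega
    have hke : k * (m - 1) + k = k * m := by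
      obtain ⟨m', rfl⟩ : ∃ m', m = m' + 1 := ⟨m - 1, by omega⟩
      simp [Nat.mul_succ]
    omega
  · -- bounds
    intro j
    have h1 := hlt j
    by_cases hji : j = i
    · subst hji; omega
    · by_cases hjp : j = p
      · subst hjp; rw [hzp]; omega
      · rw [hzrest j hji hjp]; omega
  · intro hevm
    rw [Nat.even_iff] at hevm; omega
  · intro _
    refine ⟨p, ?_, ?_⟩
    · show Even (z p)
      rw [hzp, Nat.even_iff]
      have := Nat.odd_iff.mp (hodd p)
      omega
    · intro j hj
      by_contra hjp
      have hj2 : Even (z j) := hj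
      rw [Nat.even_iff] at hj2
      clear hj
      rename' hj2 => hj
      by_cases hji : j = i
      · subst hji
        have := Nat.odd_iff.mp (hodd j)
        omega
      · rw [hzrest j hji hjp] at hj
        have h3 := hno1 j hji hjp
        have := Nat.odd_iff.mp (hodd j)
        omega
  · intro j
    rw [hy j]
    by_cases hji : j = i
    · subst hji; simp [hzi]
    · rw [if_neg hji]
      by_cases hjp : j = p
      · subst hjp; omega
      · rw [hzrest j hji hjp]; omega

end Exc

section Move
variable {k : ℕ} {x y : Fin (k+1) → ℕ} {i : Fin (k+1)}

lemma D_lower (hk : 2 ≤ k)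
    (hi : ∀ j, j ≠ i → 0 < x j)
    (hE : (∃ j, Even (x j)) → Even (x i) ∧ ∀ j, Even (x j) → x i ≤ x j)
    (hO : (∀ j, Odd (x j)) → ∀ j, x j ≤ x i)
    (hy : ∀ j, y j = if j = i then x j else x j - 1)
    (hnx : ¬ Exceptional k x) {b : ℕ} (hb : b ∈ Stmt17Aux.SB k y) :
    b + 1 ∈ Stmt17Aux.SB k x := by
  classical
  obtain ⟨z, ⟨hzsum, hzle, hev, hodd⟩, hzy⟩ := hb
  have hyle : ∀ j, j ≠ i → z j + 1 ≤ x j := by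
    intro j hj
    have h1 := hzy j
    rw [hy j, if_neg hj] at h1
    have := hi j hj
    omega
  have hzi : z i ≤ x i := by
    have h1 := hzy i
    rw [hy i, if_pos rfl] at h1
    exact h1
  have hkb : k * (b+1) = k * b + k := by ring
  rcases Nat.even_or_odd b with hbe | hbo
  · -- b even: explicit witness z+1 off i
    have hbe2 := Nat.even_iff.mp hbe
    refine ⟨fun j => if j = i then z j else z j + 1, ⟨?_, ?_, ?_, ?_⟩, ?_⟩
    · show (∑ j, if j = i then z j else z j + 1) = k * (b+1)
      have hs1 := split1 (fun j => if j = i then z j else z j + 1) i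
      have hs2 := split1 z i
      have hc : ∑ j ∈ Finset.univ.erase i, (if j = i then z j else z j + 1)
          = ∑ j ∈ Finset.univ.erase i, (z j + 1) := by
        apply Finset.sum_congr rfl
        intro j hj
        rw [if_neg (Finset.ne_of_mem_erase hj)]
      rw [hc, sum_add_card, card_erase1, if_pos rfl] at hs1
      omega
    · intro j
      show (if j = i then z j else z j + 1) ≤ b + 1
      have := hzle j
      by_cases hj : j = i
      · rw [if_pos hj]; omega
      · rw [if_neg hj]; omega
    · intro hbe1
      exfalso
      have := Nat.even_iff.mp hbe1
      omega
    · intro _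
      refine ⟨i, ?_, ?_⟩
      · show Even (if i = i then z i else z i + 1)
        rw [if_pos rfl]
        exact hev hbe i
      · intro j hj
        have hj2 : Even (if j = i then z j else z j + 1) := hj
        by_contra hji
        rw [if_neg hji, Nat.even_iff] at hj2
        have := Nat.even_iff.mp (hev hbe j)
        omega
    · intro j
      show (if j = i then z j else z j + 1) ≤ x j
      by_cases hj : j = i
      · subst hj; rw [if_pos rfl]; exact hzi
      · rw [if_neg hj]; exact hyle j hj
  · -- b odd
    have hbo2 := Nat.odd_iff.mp hbo
    obtain ⟨i₀, hi₀e', hi₀u'⟩ := hodd hbo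
    have hi₀e : Even (z i₀) := hi₀e'
    have hi₀u : ∀ j, Even (z j) → j = i₀ := fun j hj => hi₀u' j hj
    have hzodd : ∀ j, j ≠ i₀ → z j % 2 = 1 := by
      intro j hj
      rcases Nat.even_or_odd (z j) with h | h
      · exact absurd (hi₀u j h) hj
      · exact Nat.odd_iff.mp h
    apply Stmt17Aux.even_char x (by exact ⟨(b+1)/2, by omega⟩)
    set F : Fin (k+1) → ℕ := fun j => 2 * (min (x j) (b+1) / 2) with hF
    show k * (b+1) ≤ ∑ j, F j
    have hFle : ∀ j v, v % 2 = 0 → v ≤ x j → v ≤ b + 1 → v ≤ F j := by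
      intro j v hv h1 h2
      exact Stmt17Aux.le_ef (Nat.even_iff.mpr hv) (le_min h1 h2)
    have hFrest : ∀ j, j ≠ i → j ≠ i₀ → z j + 1 ≤ F j := by
      intro j h1 h2
      refine hFle j _ (by have := hzodd j h2; omega) (hyle j h1) (by have := hzle j; omega)
    have hzi₀x : z i₀ ≤ x i₀ := by
      by_cases h : i₀ = i
      · subst h; exact hzi
      · have := hyle i₀ h; omega
    have hFi₀ : z i₀ ≤ F i₀ :=
      hFle i₀ _ (Nat.even_iff.mp hi₀e) hzi₀x (by have := hzle i₀; omega)
    by_cases hii : i = i₀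
    · -- pivot is the kept coordinate
      subst hii
      have hs1 := split1 F i
      have hs2 := split1 z i
      have hrest : ∑ j ∈ Finset.univ.erase i, (z j + 1) ≤ ∑ j ∈ Finset.univ.erase i, F j := by
        apply Finset.sum_le_sum
        intro j hj
        exact hFrest j (Finset.ne_of_mem_erase hj) (Finset.ne_of_mem_erase hj)
      rw [sum_add_card, card_erase1] at hrest
      omega
    · have hi₀i : i₀ ≠ i := fun h => hii h.symm
      have hzi_odd : z i % 2 = 1 := hzodd i hii
      have hFi1 : z i ≤ F i + 1 := by
        have : z i - 1 ≤ F i := hFle i _ (by omega) (by omega) (by have := hzle i; omega)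
        omega
      by_cases hxi : z i < x i
      · have hFi : z i + 1 ≤ F i := hFle i _ (by omega) (by omega) (by have := hzle i; omega)
        have hs1 := split2 F hi₀i
        have hs2 := split2 z hi₀i
        have hrest : ∑ j ∈ (Finset.univ.erase i).erase i₀, (z j + 1)
            ≤ ∑ j ∈ (Finset.univ.erase i).erase i₀, F j := by
          apply Finset.sum_le_sum
          intro j hj
          exact hFrest j (Finset.ne_of_mem_erase (Finset.mem_of_mem_erase hj))
            (Finset.ne_of_mem_erase hj)
        rw [sum_add_card, card_erase2 hi₀i] at hrest
        omega
      · have hxieq : x i = z i := by omega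
        by_cases hevx : ∃ j, Even (x j)
        · exfalso
          have h1 := Nat.even_iff.mp (hE hevx).1
          omega
        · push_neg at hevx
          have hox : ∀ j, Odd (x j) := fun j => Nat.not_even_iff_odd.mp (hevx j)
          have hmax := hO hox
          have hzi₀b : z i₀ ≤ b - 1 := by
            have h1 := Nat.even_iff.mp hi₀e
            have := hzle i₀
            omega
          by_cases hxi0 : z i₀ + 2 ≤ x i₀
          · have hFi₀' : z i₀ + 2 ≤ F i₀ := by
              refine hFle i₀ _ (by have := Nat.even_iff.mp hi₀e; omega) hxi0 (by omega)
            have hs1 := split2 F hi₀i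
            have hs2 := split2 z hi₀i
            have hrest : ∑ j ∈ (Finset.univ.erase i).erase i₀, (z j + 1)
                ≤ ∑ j ∈ (Finset.univ.erase i).erase i₀, F j := by
              apply Finset.sum_le_sum
              intro j hj
              exact hFrest j (Finset.ne_of_mem_erase (Finset.mem_of_mem_erase hj))
                (Finset.ne_of_mem_erase hj)
            rw [sum_add_card, card_erase2 hi₀i] at hrest
            have hzi1 : 1 ≤ z i := by omega
            omega
          · by_cases hxj : ∃ q, q ≠ i ∧ q ≠ i₀ ∧ z q + 3 ≤ x q
            · obtain ⟨q, hqi, hqi₀, hq3⟩ := hxj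
              have hzqb : z q + 2 ≤ b := by
                have h1 := hzle q
                have h2 := hzodd q hqi₀
                rcases Nat.lt_or_ge (z q) b with h | h
                · omega
                · exfalso
                  have h3 := hyle q hqi
                  have h4 := hmax q
                  have := hzle i
                  omega
              have hFq : z q + 3 ≤ F q := by
                refine hFle q _ (by have := hzodd q hqi₀; omega) hq3 (by omega)
              have hs1 := split3 F hi₀i hqi hqi₀
              have hs2 := split3 z hi₀i hqi hqi₀
              have hrest : ∑ j ∈ ((Finset.univ.erase i).erase i₀).erase q, (z j + 1)
                  ≤ ∑ j ∈ ((Finset.univ.erase i).erase i₀).erase q, F j := by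
                apply Finset.sum_le_sum
                intro j hj
                have hj1 := Finset.mem_of_mem_erase hj
                exact hFrest j
                  (Finset.ne_of_mem_erase (Finset.mem_of_mem_erase hj1))
                  (Finset.ne_of_mem_erase hj1)
              rw [sum_add_card, card_erase3 hi₀i hqi hqi₀] at hrest
              have hzi1 : 1 ≤ z i := by omega
              omega
            · exfalso
              apply hnx
              push_neg at hxj
              have hxi₀eq : x i₀ = z i₀ + 1 := by
                have h1 := hyle i₀ hi₀i
                omega
              have hrest_eq : ∀ j, j ≠ i → j ≠ i₀ → x j = z j + 2 := by
                intro j h1 h2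
                have h3 := hxj j h1 h2
                have h4 := hyle j h1
                have h5 := hzodd j h2
                have h6 := Nat.odd_iff.mp (hox j)
                omega
              refine ⟨b + 1, ⟨(b+1)/2, by omega⟩, hox, ?_, ?_⟩
              · intro j
                have := hmax j
                have := hzle i
                omega
              · have hs1 := split2 x hi₀i
                have hs2 := split2 z hi₀i
                have hcongr : ∑ j ∈ (Finset.univ.erase i).erase i₀, x j
                    = ∑ j ∈ (Finset.univ.erase i).erase i₀, (z j + 2) := by
                  apply Finset.sum_congr rfl
                  intro j hj
                  exact hrest_eq j (Finset.ne_of_mem_erase (Finset.mem_of_mem_erase hj))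
                    (Finset.ne_of_mem_erase hj)
                have hs3 : ∑ j ∈ (Finset.univ.erase i).erase i₀, (z j + 2)
                    = (∑ j ∈ (Finset.univ.erase i).erase i₀, z j) + 2 * (k - 1) := by
                  rw [Finset.sum_add_distrib, Finset.sum_const, smul_eq_mul,
                    card_erase2 hi₀i]
                  ring
                omega

end Move

section Move2
variable {k : ℕ} {x y : Fin (k+1) → ℕ} {i : Fin (k+1)}

lemma D_upper (hk : 2 ≤ k)
    (hi : ∀ j, j ≠ i → 0 < x j)
    (hE : (∃ j, Even (x j)) → Even (x i) ∧ ∀ j, Even (x j) → x i ≤ x j)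
    (hO : (∀ j, Odd (x j)) → ∀ j, x j ≤ x i)
    (hy : ∀ j, y j = if j = i then x j else x j - 1)
    {b : ℕ} (hb : b ∈ Stmt17Aux.SB k x) (hb1 : 1 ≤ b) :
    b - 1 ∈ Stmt17Aux.SB k y := by
  classical
  obtain ⟨z, ⟨hzsum, hzle, hev, hodd⟩, hzx⟩ := hb
  have hyi : y i = x i := by rw [hy i, if_pos rfl]
  have hyj : ∀ j, j ≠ i → y j = x j - 1 := fun j hj => by rw [hy j, if_neg hj]
  have hkb : k * b = k * (b-1) + k := by
    obtain ⟨c, rfl⟩ : ∃ c, b = c + 1 := ⟨b - 1, by omega⟩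
    simp [Nat.mul_succ]
  have hzym : ∀ j, z j - 1 ≤ y j := by
    intro j
    have h1 := hzx j
    by_cases hj : j = i
    · subst hj; rw [hyi]; omega
    · rw [hyj j hj]; omega
  rcases Nat.even_or_odd b with hbe | hbo
  · -- b even (so b ≥ 2); produce odd witness for b-1 on y
    have hbe2 := Nat.even_iff.mp hbe
    have hb2 : 2 ≤ b := by omega
    have hallz : ∀ j, Even (z j) := hev hbe
    have hz2 : ∀ j, z j % 2 = 0 := fun j => Nat.even_iff.mp (hallz j)
    have hbo1 : Odd (b - 1) := by rw [Nat.odd_iff]; omega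
    -- helper for non-pivot coordinates
    have hnonpiv : ∀ j, z j ≤ (2 * ((min (y j) (b-1) - 1) / 2) + 1) + 1 := by
      intro j
      rcases Nat.eq_zero_or_pos (z j) with h0 | h0
      · omega
      · have hz2j := hz2 j
        have h2 : z j - 1 ≤ min (y j) (b-1) := by
          have := hzym j
          have := hzle j
          omega
        have := Stmt17Aux.le_of' (v := z j - 1) (by rw [Nat.odd_iff]; omega) h2
        omega
    have hz0 : ∀ j, y j = 0 → z j = 0 := by
      intro j hj0
      have h1 := hzx j
      have hz2j := hz2 j
      by_cases hji : j = i
      · subst hji; rw [hyi] at hj0; omega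
      · have h2 := hyj j hji
        have h3 := hi j hji
        omega
    by_cases hy0 : ∃ j₀, y j₀ = 0
    · obtain ⟨j₀, hj₀⟩ := hy0
      have hzj₀ : z j₀ = 0 := hz0 j₀ hj₀
      have huniq : ∀ j, j ≠ j₀ → 1 ≤ y j := by
        intro j hj
        by_contra hc
        have hyj0 : y j = 0 := by omega
        have hzj : z j = 0 := hz0 j hyj0
        have hs := split2 z (show j ≠ j₀ from hj)
        have hrest : ∑ t ∈ (Finset.univ.erase j₀).erase j, z t
            ≤ ∑ _t ∈ (Finset.univ.erase j₀).erase j, b :=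
          Finset.sum_le_sum (fun t _ => hzle t)
        rw [Finset.sum_const, smul_eq_mul, card_erase2 (show j ≠ j₀ from hj)] at hrest
        have he : (k-1) * b + b = k * b := by
          obtain ⟨a, rfl⟩ : ∃ a, k = a + 1 := ⟨k - 1, by omega⟩
          simp [Nat.succ_mul]
        omega
      apply Stmt17Aux.odd_char y hbo1 j₀
      · intro j hj
        exact le_min (huniq j hj) (by omega)
      · have hs1 := split1 (fun j => if j = j₀ then 2 * (min (y j) (b-1) / 2)
          else 2 * ((min (y j) (b-1) - 1) / 2) + 1) j₀
        have hs2 := split1 z j₀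
        have hrest : ∑ j ∈ Finset.univ.erase j₀, z j
            ≤ ∑ j ∈ Finset.univ.erase j₀, ((2 * ((min (y j) (b-1) - 1) / 2) + 1) + 1) := by
          apply Finset.sum_le_sum
          intro j _
          exact hnonpiv j
        rw [sum_add_card, card_erase1] at hrest
        have hcongr : ∑ j ∈ Finset.univ.erase j₀, (if j = j₀ then 2 * (min (y j) (b-1) / 2)
            else 2 * ((min (y j) (b-1) - 1) / 2) + 1)
            = ∑ j ∈ Finset.univ.erase j₀, (2 * ((min (y j) (b-1) - 1) / 2) + 1) := by
          apply Finset.sum_congr rfl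
          intro j hj
          rw [if_neg (Finset.ne_of_mem_erase hj)]
        have hpiv : (if j₀ = j₀ then 2 * (min (y j₀) (b-1) / 2)
            else 2 * ((min (y j₀) (b-1) - 1) / 2) + 1) = 2 * (min (y j₀) (b-1) / 2) :=
          if_pos rfl
        rw [hcongr, hpiv] at hs1
        have haux : ∑ j ∈ Finset.univ.erase j₀, ((2 * ((min (y j) (b-1) - 1) / 2) + 1) + 1)
            = (∑ j ∈ Finset.univ.erase j₀, (2 * ((min (y j) (b-1) - 1) / 2) + 1)) + k := by
          rw [sum_add_card, card_erase1]
        omega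
    · push_neg at hy0
      have hally : ∀ j, 1 ≤ y j := fun j => Nat.pos_of_ne_zero (hy0 j)
      by_cases halpha : ∃ p, z p ≤ y p ∧ z p + 2 ≤ b
      · obtain ⟨p, hp1, hp2⟩ := halpha
        apply Stmt17Aux.odd_char y hbo1 p
        · intro j _
          exact le_min (hally j) (by omega)
        · have hpiv : z p ≤ 2 * (min (y p) (b-1) / 2) :=
            Stmt17Aux.le_ef (hallz p) (le_min hp1 (by omega))
          have hs1 := split1 (fun j => if j = p then 2 * (min (y j) (b-1) / 2)
            else 2 * ((min (y j) (b-1) - 1) / 2) + 1) p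
          have hs2 := split1 z p
          have hrest : ∑ j ∈ Finset.univ.erase p, z j
              ≤ ∑ j ∈ Finset.univ.erase p, ((2 * ((min (y j) (b-1) - 1) / 2) + 1) + 1) :=
            Finset.sum_le_sum (fun j _ => hnonpiv j)
          rw [sum_add_card, card_erase1] at hrest
          have hcongr : ∑ j ∈ Finset.univ.erase p, (if j = p then 2 * (min (y j) (b-1) / 2)
              else 2 * ((min (y j) (b-1) - 1) / 2) + 1)
              = ∑ j ∈ Finset.univ.erase p, (2 * ((min (y j) (b-1) - 1) / 2) + 1) := by
            apply Finset.sum_congr rfl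
            intro j hj
            rw [if_neg (Finset.ne_of_mem_erase hj)]
          have hpiv2 : (if p = p then 2 * (min (y p) (b-1) / 2)
              else 2 * ((min (y p) (b-1) - 1) / 2) + 1) = 2 * (min (y p) (b-1) / 2) :=
            if_pos rfl
          rw [hcongr, hpiv2] at hs1
          have haux : ∑ j ∈ Finset.univ.erase p, ((2 * ((min (y j) (b-1) - 1) / 2) + 1) + 1)
              = (∑ j ∈ Finset.univ.erase p, (2 * ((min (y j) (b-1) - 1) / 2) + 1)) + k := by
            rw [sum_add_card, card_erase1]
          omega
      · exfalso
        push_neg at halpha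
        have hzi : z i = b := by
          have h1 := halpha i (by rw [hyi]; exact hzx i)
          have := hzle i
          have := hz2 i
          omega
        have hall : ∀ p, z p = b := by
          intro p
          by_cases hpi : p = i
          · subst hpi; exact hzi
          · by_cases hzyp : z p ≤ y p
            · have h1 := halpha p hzyp
              have := hzle p
              have := hz2 p
              omega
            · have h2 := hyj p hpi
              have h3 := hi p hpi
              have hzp : z p = x p := by have := hzx p; omega
              have hxpe : Even (x p) := by rw [← hzp]; exact hallz p
              have h4 := (hE ⟨p, hxpe⟩).2 p hxpe
              have h5 : x i ≥ z i := hzx i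
              have := hzle p
              omega
        have hsz : ∑ j, z j = ∑ _j : Fin (k+1), b := Finset.sum_congr rfl (fun j _ => hall j)
        rw [Finset.sum_const, Finset.card_univ, Fintype.card_fin, smul_eq_mul] at hsz
        have : (k+1) * b = k * b + b := by ring
        omega
  · -- b odd: produce even witness for b-1 on y
    have hbo2 := Nat.odd_iff.mp hbo
    obtain ⟨i₀, hi₀e', hi₀u'⟩ := hodd hbo
    have hi₀e : Even (z i₀) := hi₀e'
    have hzodd : ∀ j, j ≠ i₀ → z j % 2 = 1 := by
      intro j hj
      rcases Nat.even_or_odd (z j) with h | h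
      · exact absurd (hi₀u' j h) hj
      · exact Nat.odd_iff.mp h
    apply Stmt17Aux.even_char y (by rw [Nat.even_iff]; omega)
    set G : Fin (k+1) → ℕ := fun j => 2 * (min (y j) (b-1) / 2) with hG
    show k * (b-1) ≤ ∑ j, G j
    have hGle : ∀ j v, v % 2 = 0 → v ≤ y j → v ≤ b - 1 → v ≤ G j := by
      intro j v hv h1 h2
      exact Stmt17Aux.le_ef (Nat.even_iff.mpr hv) (le_min h1 h2)
    have hGrest : ∀ j, j ≠ i₀ → z j ≤ G j + 1 := by
      intro j hj
      have h1 := hzodd j hj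
      have h2 : z j - 1 ≤ G j :=
        hGle j _ (by omega) (hzym j) (by have := hzle j; omega)
      omega
    by_cases hii : i = i₀
    · subst hii
      have hGi : z i ≤ G i := by
        refine hGle i _ (Nat.even_iff.mp hi₀e) (by rw [hyi]; exact hzx i) ?_
        have := hzle i
        have := Nat.even_iff.mp hi₀e
        omega
      have hs1 := split1 G i
      have hs2 := split1 z i
      have hrest : ∑ j ∈ Finset.univ.erase i, z j
          ≤ ∑ j ∈ Finset.univ.erase i, (G j + 1) :=
        Finset.sum_le_sum (fun j hj => hGrest j (Finset.ne_of_mem_erase hj))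
      rw [sum_add_card, card_erase1] at hrest
      omega
    · have hi₀i : i₀ ≠ i := fun h => hii h.symm
      have hi₀b : z i₀ ≤ b - 1 := by
        have := hzle i₀
        have := Nat.even_iff.mp hi₀e
        omega
      by_cases hzi₀ : z i₀ + 1 ≤ x i₀
      · have hGi₀ : z i₀ ≤ G i₀ := by
          refine hGle i₀ _ (Nat.even_iff.mp hi₀e) ?_ hi₀b
          rw [hyj i₀ hi₀i]; omega
        have hs1 := split1 G i₀
        have hs2 := split1 z i₀
        have hrest : ∑ j ∈ Finset.univ.erase i₀, z j
            ≤ ∑ j ∈ Finset.univ.erase i₀, (G j + 1) :=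
          Finset.sum_le_sum (fun j hj => hGrest j (Finset.ne_of_mem_erase hj))
        rw [sum_add_card, card_erase1] at hrest
        omega
      · have hzx0 : z i₀ = x i₀ := by have := hzx i₀; omega
        have hxi₀e : Even (x i₀) := by rw [← hzx0]; exact hi₀e
        obtain ⟨hxie, hxmin⟩ := hE ⟨i₀, hxi₀e⟩
        have hxii₀ : x i ≤ x i₀ := hxmin i₀ hxi₀e
        have hxie2 := Nat.even_iff.mp hxie
        have hzieon := hzodd i hii
        have hzixi : z i + 1 ≤ x i := by have := hzx i; omega
        have hzib : z i + 2 ≤ b := by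
          have h1 := hzle i
          rcases Nat.lt_or_ge (z i) b with h | h
          · omega
          · exfalso
            have h2 : x i ≥ b + 1 := by omega
            have := hzle i₀
            omega
        have hGi : z i + 1 ≤ G i := by
          refine hGle i _ (by omega) (by rw [hyi]; omega) (by omega)
        have hzi₀2 : 2 ≤ z i₀ := by
          have := Nat.even_iff.mp hi₀e
          omega
        have hGi₀ : z i₀ ≤ G i₀ + 2 := by
          have h2 : z i₀ - 2 ≤ G i₀ := by
            refine hGle i₀ _ (by have := Nat.even_iff.mp hi₀e; omega) ?_ (by omega)
            rw [hyj i₀ hi₀i]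
            omega
          omega
        have hs1 := split2 G hi₀i
        have hs2 := split2 z hi₀i
        have hrest : ∑ j ∈ (Finset.univ.erase i).erase i₀, z j
            ≤ ∑ j ∈ (Finset.univ.erase i).erase i₀, (G j + 1) :=
          Finset.sum_le_sum (fun j hj => hGrest j (Finset.ne_of_mem_erase hj))
        rw [sum_add_card, card_erase2 hi₀i] at hrest
        omega

end Move2

section Final
variable {k : ℕ} {x y : Fin (k+1) → ℕ} {i : Fin (k+1)}

lemma y_not_exc (hk : 2 ≤ k)
    (hE : (∃ j, Even (x j)) → Even (x i) ∧ ∀ j, Even (x j) → x i ≤ x j)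
    (hy : ∀ j, y j = if j = i then x j else x j - 1)
    (hi : ∀ j, j ≠ i → 0 < x j) :
    ¬ Exceptional k y := by
  rintro ⟨m, _, hyodd, _, _⟩
  by_cases hevx : ∃ j, Even (x j)
  · have hxie := Nat.even_iff.mp (hE hevx).1
    have h2 : Odd (y i) := hyodd i
    rw [hy i, if_pos rfl, Nat.odd_iff] at h2
    omega
  · push_neg at hevx
    obtain ⟨j, hj⟩ := exists_ne_fin hk i
    have hox : Odd (x j) := Nat.not_even_iff_odd.mp (hevx j)
    have h2 : Odd (y j) := hyodd j
    rw [hy j, if_neg hj, Nat.odd_iff] at h2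
    rw [Nat.odd_iff] at hox
    have := hi j hj
    omega

lemma bval_zero (hk : 2 ≤ k) (h : ¬ ∃ y, MoveK k x y) :
    BVal k x = 0 ∧ ¬ Exceptional k x := by
  obtain ⟨j₁, j₂, hne, h1, h2⟩ := two_zeros (by omega) h
  constructor
  · rw [Stmt17Aux.bval_eq_sSup_SB]
    have hb0 : ∀ b ∈ Stmt17Aux.SB k x, b = 0 := by
      rintro b ⟨z, ⟨hzsum, hzle, _, _⟩, hle⟩
      have hz1 : z j₁ = 0 := by have := hle j₁; omega
      have hz2 : z j₂ = 0 := by have := hle j₂; omega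
      have hs := split2 z (show j₂ ≠ j₁ from fun hq => hne hq.symm)
      have hrest : ∑ t ∈ (Finset.univ.erase j₁).erase j₂, z t
          ≤ ∑ _t ∈ (Finset.univ.erase j₁).erase j₂, b :=
        Finset.sum_le_sum (fun t _ => hzle t)
      rw [Finset.sum_const, smul_eq_mul,
        card_erase2 (show j₂ ≠ j₁ from fun hq => hne hq.symm)] at hrest
      have he : (k-1) * b + b = k * b := by
        obtain ⟨a, rfl⟩ : ∃ a, k = a + 1 := ⟨k - 1, by omega⟩
        simp [Nat.succ_mul]
      omega
    have hle0 : sSup (Stmt17Aux.SB k x) ≤ 0 :=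
      csSup_le ⟨0, Stmt17Aux.zero_mem_SB k x⟩ (fun b hb => Nat.le_zero.mpr (hb0 b hb))
    omega
  · rintro ⟨m, _, hodd, _, _⟩
    have := Nat.odd_iff.mp (hodd j₁)
    omega

lemma C_part (hk : 2 ≤ k)
    (hi : ∀ j, j ≠ i → 0 < x j)
    (hO : (∀ j, Odd (x j)) → ∀ j, x j ≤ x i)
    (hy : ∀ j, y j = if j = i then x j else x j - 1)
    (hexc : Exceptional k x) :
    BVal k x = BVal k y := by
  obtain ⟨m₀, hm₀, hodd, hlt, hsum⟩ := hexc
  have hmax := hO hodd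
  rw [Stmt17Aux.bval_eq_sSup_SB, Stmt17Aux.bval_eq_sSup_SB]
  have hsub : Stmt17Aux.SB k y ⊆ Stmt17Aux.SB k x := by
    rintro b ⟨z, hb, hle⟩
    refine ⟨z, hb, fun j => le_trans (hle j) ?_⟩
    rw [hy j]
    by_cases hj : j = i
    · rw [if_pos hj]
    · rw [if_neg hj]; omega
  have h1 : sSup (Stmt17Aux.SB k y) ≤ sSup (Stmt17Aux.SB k x) :=
    csSup_le_csSup (bddAbove_SB k (by omega) x) ⟨0, Stmt17Aux.zero_mem_SB k y⟩ hsub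
  have h2 : sSup (Stmt17Aux.SB k x) ≤ m₀ - 1 :=
    csSup_le ⟨0, Stmt17Aux.zero_mem_SB k x⟩
      (fun b hb => exc_b_le hk hodd hlt hm₀ hsum hb)
  have h3 : m₀ - 1 ≤ sSup (Stmt17Aux.SB k y) :=
    le_csSup (bddAbove_SB k (by omega) y) (exc_mem hk hy hmax hodd hlt hm₀ hsum)
  omega

lemma D_part (hk : 2 ≤ k)
    (hi : ∀ j, j ≠ i → 0 < x j)
    (hE : (∃ j, Even (x j)) → Even (x i) ∧ ∀ j, Even (x j) → x i ≤ x j)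
    (hO : (∀ j, Odd (x j)) → ∀ j, x j ≤ x i)
    (hy : ∀ j, y j = if j = i then x j else x j - 1)
    (hnx : ¬ Exceptional k x) :
    BVal k x = BVal k y + 1 := by
  rw [Stmt17Aux.bval_eq_sSup_SB, Stmt17Aux.bval_eq_sSup_SB]
  have hbdx := bddAbove_SB k (by omega) x
  have hbdy := bddAbove_SB k (by omega) y
  have hlow : sSup (Stmt17Aux.SB k y) + 1 ≤ sSup (Stmt17Aux.SB k x) := by
    have hmem : sSup (Stmt17Aux.SB k y) ∈ Stmt17Aux.SB k y :=
      Nat.sSup_mem ⟨0, Stmt17Aux.zero_mem_SB k y⟩ hbdy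
    exact le_csSup hbdx (D_lower hk hi hE hO hy hnx hmem)
  have hup : sSup (Stmt17Aux.SB k x) ≤ sSup (Stmt17Aux.SB k y) + 1 := by
    apply csSup_le ⟨0, Stmt17Aux.zero_mem_SB k x⟩
    intro b hb
    rcases Nat.eq_zero_or_pos b with rfl | hb1
    · omega
    · have := le_csSup hbdy (D_upper hk hi hE hO hy hb hb1)
      omega
  omega

end Final

end Stmt17Aux

theorem stmt17 (k : ℕ) (hk : 2 ≤ k) (x : Fin (k+1) → ℕ) (m : ℕ)
    (h : MVal k x m) :
    (¬ Exceptional k x → m = BVal k x) ∧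
    (Exceptional k x → m = BVal k x + 1) := by
  induction h with
  | zero x hx =>
    obtain ⟨h0, hnx⟩ := Stmt17Aux.bval_zero hk hx
    exact ⟨fun _ => h0.symm, fun hexc => absurd hexc hnx⟩
  | succ x y m hmove hmv ih =>
    obtain ⟨i, hi, hE, hO, hy⟩ := hmove
    have hny : ¬ Exceptional k y := Stmt17Aux.y_not_exc hk hE hy hi
    have hm' : m = BVal k y := ih.1 hny
    by_cases hexc : Exceptional k x
    · have hC : BVal k x = BVal k y := Stmt17Aux.C_part hk hi hO hy hexc
      exact ⟨fun h' => absurd hexc h', fun _ => by omega⟩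
    · have hD : BVal k x = BVal k y + 1 := Stmt17Aux.D_part hk hi hE hO hy hexc
      exact ⟨fun _ => by omega, fun h' => absurd h' hexc⟩
end

section
/- A position x of NIM(k+1,k) satisfies R(x) = m with all plays under the M-rule, and x is m-critical (minimal under ⪰ among positions with M-value m), if and only if either (A) |x| = k·m, max_i x_i ≤ m, and x is all-even when m is even while exactly one coordinate of x is even when m is odd; or (B) |x| = k·m + k − 1, max_i x_i < m, m is even, and all coordinates of x are odd. -/
section Stmt19Proof
open Finset
namespace S19


def srt {n : ℕ} (x : Fin n → ℕ) : Fin n → ℕ := x ∘ Tuple.sort x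

lemma srt_mono {n : ℕ} (x : Fin n → ℕ) : Monotone (srt x) := Tuple.monotone_sort x

lemma sum_srt {n : ℕ} (x : Fin n → ℕ) : ∑ j, srt x j = ∑ j, x j :=
  Equiv.sum_comp (Tuple.sort x) x

lemma srt_le_add {n : ℕ} (s t : Fin n → ℕ) (c : ℕ) (h : ∀ j, s j ≤ t j + c) :
    ∀ j, srt s j ≤ srt t j + c := by
  intro j
  classical
  set σ := Tuple.sort s
  set τ := Tuple.sort t
  -- S := image of Iic j under τ
  have hcardS : ((Finset.Iic j).image τ).card = (j : ℕ) + 1 := by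
    rw [Finset.card_image_of_injective _ (Equiv.injective τ), Fin.card_Iic]
  -- P := image of S under σ.symm
  set P := ((Finset.Iic j).image τ).image σ.symm with hP
  have hcardP : P.card = (j : ℕ) + 1 := by
    rw [hP, Finset.card_image_of_injective _ (Equiv.injective σ.symm), hcardS]
  have : ∃ l ∈ P, j ≤ l := by
    by_contra hcon
    push_neg at hcon
    have hsub : P ⊆ Finset.Iio j := fun l hl => Finset.mem_Iio.mpr (hcon l hl)
    have := Finset.card_le_card hsub
    rw [hcardP, Fin.card_Iio] at this
    omega
  obtain ⟨l, hlP, hjl⟩ := this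
  obtain ⟨l', hl'formed, hl'⟩ := Finset.mem_image.mp hlP
  obtain ⟨l'', hl''mem, hl''⟩ := Finset.mem_image.mp hl'formed
  have hσl : σ l = τ l'' := by
    rw [hl'', ← hl']; simp
  calc srt s j ≤ srt s l := srt_mono s hjl
    _ = s (σ l) := rfl
    _ = s (τ l'') := by rw [hσl]
    _ ≤ t (τ l'') + c := h _
    _ = srt t l'' + c := rfl
    _ ≤ srt t j + c := by
        have : l'' ≤ j := Finset.mem_Iic.mp hl''mem
        exact Nat.add_le_add_right (srt_mono t this) c

lemma srt_le {n : ℕ} (s t : Fin n → ℕ) (h : ∀ j, s j ≤ t j) : ∀ j, srt s j ≤ srt t j := by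
  intro j
  have := srt_le_add s t 0 (fun j => by simpa using h j) j
  simpa using this

lemma srt_srt {n : ℕ} (x : Fin n → ℕ) : srt (srt x) = srt x := by
  have h : Tuple.sort (srt x) = Equiv.refl _ :=
    Tuple.sort_eq_refl_iff_monotone.mpr (srt_mono x)
  show (srt x) ∘ (Tuple.sort (srt x)) = srt x
  rw [h]; rfl




lemma forall_perm {n : ℕ} (x : Fin n → ℕ) (e : Equiv.Perm (Fin n)) (P : ℕ → Prop) :
    (∀ j, P (x (e j))) ↔ ∀ j, P (x j) :=
  ⟨fun h j => by simpa using h (e.symm j), fun h j => h _⟩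

lemma existsUnique_perm {n : ℕ} (x : Fin n → ℕ) (e : Equiv.Perm (Fin n)) (P : ℕ → Prop) :
    (∃! j, P (x (e j))) ↔ ∃! j, P (x j) := by
  constructor
  · rintro ⟨j, hj, hu⟩
    refine ⟨e j, hj, fun l hl => ?_⟩
    have := hu (e.symm l) (by simpa using hl)
    rw [← this]; simp
  · rintro ⟨j, hj, hu⟩
    refine ⟨e.symm j, by simpa using hj, fun l hl => ?_⟩
    have := hu (e l) hl
    rw [← this]; simp

lemma forall_srt {n : ℕ} (x : Fin n → ℕ) (P : ℕ → Prop) :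
    (∀ j, P (srt x j)) ↔ ∀ j, P (x j) := forall_perm x (Tuple.sort x) P

lemma existsUnique_srt {n : ℕ} (x : Fin n → ℕ) (P : ℕ → Prop) :
    (∃! j, P (srt x j)) ↔ ∃! j, P (x j) := existsUnique_perm x (Tuple.sort x) P

/-- RHS predicate of the theorem. -/
def RHS (k m : ℕ) (x : Fin (k+1) → ℕ) : Prop :=
  ((∑ i, x i) = k * m ∧ (∀ i, x i ≤ m) ∧
      (Even m → ∀ i, Even (x i)) ∧ (Odd m → ∃! i, Even (x i))) ∨
  ((∑ i, x i) = k * m + k - 1 ∧ (∀ i, x i < m) ∧ Even m ∧ ∀ i, Odd (x i))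

lemma rhs_srt {k m : ℕ} (x : Fin (k+1) → ℕ) : RHS k m (srt x) ↔ RHS k m x := by
  unfold RHS
  simp only [srt, Function.comp_apply, Function.comp]
  rw [Equiv.sum_comp (Tuple.sort x) x, forall_perm x _ (· ≤ m), forall_perm x _ (· < m),
    forall_perm x _ Even, forall_perm x _ Odd, existsUnique_perm x _ Even]

lemma rhs_of_srt_eq {k m : ℕ} {r x : Fin (k+1) → ℕ} (h : srt r = srt x) (hr : RHS k m r) :
    RHS k m x := by
  rw [← rhs_srt] at hr ⊢
  rwa [← h]




lemma even_sub_one {a : ℕ} (h : 1 ≤ a) : Even (a - 1) ↔ Odd a := by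
  simp only [Nat.even_iff, Nat.odd_iff]; omega

lemma odd_sub_one {a : ℕ} (h : 1 ≤ a) : Odd (a - 1) ↔ Even a := by
  simp only [Nat.odd_iff, Nat.even_iff]; omega

lemma exists_ne {k : ℕ} (hk : 2 ≤ k) (i : Fin (k+1)) : ∃ j : Fin (k+1), j ≠ i := by
  refine ⟨⟨if i.val = 0 then 1 else 0, by split <;> omega⟩, ?_⟩
  by_cases h : i.val = 0 <;> simp [Fin.ext_iff, h] <;> omega

lemma sum_two_zero {k : ℕ} (x : Fin (k+1) → ℕ) (c : ℕ) (hc : ∀ j, x j ≤ c)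
    {i j : Fin (k+1)} (hij : i ≠ j) (hi : x i = 0) (hj : x j = 0) :
    (∑ l, x l) + c + c ≤ (k+1) * c := by
  have hsub : ∑ l, x l = ∑ l ∈ (univ.erase i).erase j, x l := by
    refine (Finset.sum_subset (Finset.subset_univ _) ?_).symm
    intro l _ hl
    simp only [Finset.mem_erase, Finset.mem_univ, and_true, not_and_or, not_not] at hl
    rcases hl with h | h
    · rw [h, hj]
    · rw [h, hi]
  have hcard : ((univ.erase i).erase j).card = k - 1 := by
    rw [Finset.card_erase_of_mem, Finset.card_erase_of_mem (mem_univ i)]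
    · simp [Finset.card_univ]
    · exact Finset.mem_erase.mpr ⟨hij.symm, mem_univ j⟩
  have hle : ∑ l ∈ (univ.erase i).erase j, x l ≤ (k - 1) * c := by
    calc ∑ l ∈ (univ.erase i).erase j, x l ≤ ∑ _l ∈ (univ.erase i).erase j, c :=
          Finset.sum_le_sum fun l _ => hc l
      _ = (k-1) * c := by rw [Finset.sum_const, hcard, smul_eq_mul]
  have hX : x i ≤ c := hc i
  have h1 : (k - 1) * c + c + c = (k + 1) * c := by
    have h2 : k - 1 + 2 = k + 1 := by
      rcases Nat.eq_zero_or_pos k with h | h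
      · subst h; simp at hij ⊢; omega
      · omega
    calc (k-1) * c + c + c = (k - 1 + 2) * c := by ring
      _ = (k+1) * c := by rw [h2]
  omega

lemma sum_move {k : ℕ} {x y : Fin (k+1) → ℕ} {i : Fin (k+1)}
    (hpos : ∀ j, j ≠ i → 0 < x j) (hy : ∀ j, y j = if j = i then x j else x j - 1) :
    (∑ j, y j) + k = ∑ j, x j := by
  have hcard : (univ.erase i).card = k := by
    rw [Finset.card_erase_of_mem (mem_univ i)]; simp [Finset.card_univ]
  have h1 : ∑ j ∈ univ.erase i, y j = (∑ j ∈ univ.erase i, x j) - (∑ _j ∈ univ.erase i, 1) := by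
    rw [← Finset.sum_tsub_distrib]
    · exact Finset.sum_congr rfl fun j hj => by
        rw [hy j, if_neg (Finset.mem_erase.mp hj).1]
    · intro j hj
      exact hpos j (Finset.mem_erase.mp hj).1
  have h2 : (k : ℕ) ≤ ∑ j ∈ univ.erase i, x j := by
    have := Finset.card_nsmul_le_sum (univ.erase i) x 1
      (fun j hj => hpos j (Finset.mem_erase.mp hj).1)
    simpa [hcard] using this
  have h3 : ∑ _j ∈ univ.erase i, (1:ℕ) = k := by rw [Finset.sum_const, hcard, smul_eq_mul]; ring
  have h4 := Finset.add_sum_erase univ y (mem_univ i)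
  have h5 := Finset.add_sum_erase univ x (mem_univ i)
  have h6 : y i = x i := by rw [hy i, if_pos rfl]
  omega

lemma mval_zero_of_two_zeros {k : ℕ} (x : Fin (k+1) → ℕ) {i j : Fin (k+1)}
    (hij : i ≠ j) (hi : x i = 0) (hj : x j = 0) : MVal k x 0 := by
  refine MVal.zero x ?_
  rintro ⟨y, l, hpos, -⟩
  by_cases h : i = l
  · subst h
    exact absurd (hpos j (Ne.symm hij)) (by simp [hj])
  · exact absurd (hpos i h) (by simp [hi])

lemma L1 {k : ℕ} (hk : 2 ≤ k) : ∀ (m : ℕ) (x : Fin (k+1) → ℕ),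
    (∑ i, x i) = k * m → (∀ i, x i ≤ m) → (Even m → ∀ i, Even (x i)) →
    (Odd m → ∃! i, Even (x i)) → MVal k x m := by
  intro m
  induction m with
  | zero =>
    intro x hsum _ _ _
    have hz : ∀ i, x i = 0 := by
      intro i
      have h0 : ∑ i, x i = 0 := by simpa using hsum
      exact Finset.sum_eq_zero_iff.mp h0 i (mem_univ i)
    obtain ⟨j, hj⟩ := exists_ne hk (0 : Fin (k+1))
    exact mval_zero_of_two_zeros x hj (hz j) (hz 0)
  | succ m ih =>
    intro x hsum hcap hparE hparO
    rcases Nat.even_or_odd (m+1) with hm | hm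
    · -- m+1 even: all coords even, keep global min
      have hOm : Odd m := Nat.not_even_iff_odd.mp (Nat.even_add_one.mp hm)
      have hall : ∀ i, Even (x i) := hparE hm
      obtain ⟨i, -, hmin⟩ := Finset.exists_min_image univ x ⟨0, mem_univ 0⟩
      replace hmin : ∀ j, x i ≤ x j := fun j => hmin j (mem_univ j)
      have hpos : ∀ j, j ≠ i → 0 < x j := by
        intro j hj
        rcases Nat.eq_zero_or_pos (x j) with h0 | h
        · exfalso
          have hxi : x i = 0 := le_antisymm (h0 ▸ hmin j) (Nat.zero_le _)
          have hb := sum_two_zero x (m+1) hcap hj h0 hxi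
          rw [hsum] at hb
          have h2 : (k+1)*(m+1) = k*(m+1) + (m+1) := by ring
          omega
        · exact h
      have hxim : x i ≤ m := by
        by_contra hgt
        have hxi1 : x i = m + 1 := le_antisymm (hcap i) (by omega)
        have hall1 : ∀ j, x j = m+1 := fun j => le_antisymm (hcap j) (hxi1 ▸ hmin j)
        have hS : ∑ l, x l = (k+1) * (m+1) := by
          rw [Finset.sum_congr rfl (fun j _ => hall1 j)]
          simp [Finset.sum_const, Finset.card_univ, mul_comm]
        rw [hsum] at hS
        have h2 : (k+1)*(m+1) = k*(m+1) + (m+1) := by ring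
        omega
      set y : Fin (k+1) → ℕ := fun j => if j = i then x j else x j - 1 with hydef
      have hyj : ∀ j, y j = if j = i then x j else x j - 1 := fun j => rfl
      have hsummove : (∑ j, y j) + k = ∑ j, x j := sum_move hpos hyj
      have hmove : MMove k x y := by
        refine ⟨i, hpos, fun _ => ⟨hall i, fun j _ => hmin j⟩, fun hodd => ?_, hyj⟩
        exact absurd (hall i) (Nat.not_even_iff_odd.mpr (hodd i))
      refine MVal.succ x y m hmove (ih y ?_ ?_ ?_ ?_)
      · have h2 : k*(m+1) = k*m + k := by ring
        omega
      · intro j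
        rw [hyj j]; split
        · next h => subst h; exact hxim
        · have := hcap j; omega
      · intro hEm
        exact absurd hEm (Nat.not_even_iff_odd.mpr hOm)
      · intro _
        refine ⟨i, ?_, ?_⟩
        · show Even (y i)
          rw [hyj i, if_pos rfl]; exact hall i
        intro j hj
        by_contra hne
        rw [hyj j, if_neg hne, even_sub_one (hpos j hne)] at hj
        exact absurd (hall j) (Nat.not_even_iff_odd.mpr hj)
    · -- m+1 odd: unique even coordinate, keep it
      have hEm : Even m := by
        rcases Nat.even_or_odd m with h | h
        · exact h
        · exfalso; rw [Nat.odd_iff] at hm h; omega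
      obtain ⟨i, hieven, hiu⟩ := hparO hm
      have hodd' : ∀ j, j ≠ i → Odd (x j) := by
        intro j hj
        rcases Nat.even_or_odd (x j) with h | h
        · exact absurd (hiu j h) hj
        · exact h
      have hpos : ∀ j, j ≠ i → 0 < x j := by
        intro j hj
        have := hodd' j hj
        rcases this with ⟨t, ht⟩; omega
      have hxim : x i ≤ m := by
        have := hcap i
        rcases Nat.eq_or_lt_of_le this with h | h
        · exfalso
          rw [← h] at hm
          exact absurd hieven (Nat.not_even_iff_odd.mpr hm)
        · omega
      set y : Fin (k+1) → ℕ := fun j => if j = i then x j else x j - 1 with hydef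
      have hyj : ∀ j, y j = if j = i then x j else x j - 1 := fun j => rfl
      have hsummove : (∑ j, y j) + k = ∑ j, x j := sum_move hpos hyj
      have hmove : MMove k x y := by
        refine ⟨i, hpos, fun _ => ⟨hieven, fun j hj => ?_⟩, fun hodd => ?_, hyj⟩
        · rw [hiu j hj]
        · exact absurd hieven (Nat.not_even_iff_odd.mpr (hodd i))
      refine MVal.succ x y m hmove (ih y ?_ ?_ ?_ ?_)
      · have h2 : k*(m+1) = k*m + k := by ring
        omega
      · intro j
        rw [hyj j]; split
        · next h => subst h; exact hxim
        · have := hcap j; omega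
      · intro _
        intro j
        rw [hyj j]; split
        · next h => subst h; exact hieven
        · next h =>
          rw [even_sub_one (hpos j h)]
          exact hodd' j h
      · intro h
        exact absurd hEm (Nat.not_even_iff_odd.mpr h)
    

/-- Intermediate class for the trajectory of exceptional positions. -/
def CC (k t : ℕ) (z : Fin (k+1) → ℕ) : Prop :=
  (∑ i, z i) = k * t + k - 1 ∧ (∀ i, z i ≤ t + 1) ∧
  (Odd t → ∃! i, Odd (z i)) ∧
  (Even t → ∃ i j, i ≠ j ∧ Even (z i) ∧ Even (z j) ∧ ∀ l, Even (z l) → (l = i ∨ l = j))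

lemma CCval {k : ℕ} (hk : 2 ≤ k) : ∀ (t : ℕ) (z : Fin (k+1) → ℕ), CC k t z → MVal k z t := by
  intro t
  induction t with
  | zero =>
    rintro z ⟨hsum, hcap, -, hE⟩
    obtain ⟨i, j, hij, hei, hej, -⟩ := hE (Even.zero)
    have hzi : z i = 0 := by
      have := hcap i; rcases hei with ⟨c, hc⟩; omega
    have hzj : z j = 0 := by
      have := hcap j; rcases hej with ⟨c, hc⟩; omega
    exact mval_zero_of_two_zeros z hij hzi hzj
  | succ t ih =>
    rintro z ⟨hsum, hcap, hO, hE⟩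
    have hr1 : k * (t+1) = k * t + k := by ring
    have hr2 : (k+1) * (t+2) = k * (t+1) + k + t + 2 := by ring
    rcases Nat.even_or_odd t with hte | hto
    · -- t even, t+1 odd: exactly one odd coordinate iw; keep the min of the evens
      obtain ⟨iw, hiw, hiwu⟩ := hO (Even.add_one hte)
      have hiw' : Odd (z iw) := hiw
      have hothers : ∀ l, l ≠ iw → Even (z l) := by
        intro l hl
        rcases Nat.even_or_odd (z l) with h | h
        · exact h
        · exact absurd (hiwu l h) hl
      obtain ⟨j0, hj0⟩ := exists_ne hk iw
      obtain ⟨i, hiS, hmin⟩ := Finset.exists_min_image (univ.erase iw) z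
        ⟨j0, Finset.mem_erase.mpr ⟨hj0, mem_univ j0⟩⟩
      have hine : i ≠ iw := (Finset.mem_erase.mp hiS).1
      have hieven : Even (z i) := hothers i hine
      have hminS : ∀ l, l ≠ iw → z i ≤ z l := fun l hl =>
        hmin l (Finset.mem_erase.mpr ⟨hl, mem_univ l⟩)
      have hpos : ∀ j, j ≠ i → 0 < z j := by
        intro j hj
        rcases Nat.eq_zero_or_pos (z j) with h0 | h
        · exfalso
          have hjne : j ≠ iw := by
            intro h; rw [h] at h0; rcases hiw' with ⟨c, hc⟩; omega
          have hzi : z i = 0 := le_antisymm (h0 ▸ hminS j hjne) (Nat.zero_le _)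
          have hb := sum_two_zero z (t+2) hcap hj h0 hzi
          rw [hsum] at hb
          omega
        · exact h
      have hcapi : z i ≤ t + 1 + 1 := hcap i
      have hzit : z i ≤ t + 1 := by
        by_contra hgt
        have hzi2 : z i = t + 2 := by omega
        have hallS : ∀ l, l ≠ iw → z l = t + 2 :=
          fun l hl => le_antisymm (hcap l) (hzi2 ▸ hminS l hl)
        have hcard : (univ.erase iw).card = k := by
          rw [Finset.card_erase_of_mem (mem_univ iw)]; simp [Finset.card_univ]
        have hSsum : ∑ l ∈ univ.erase iw, z l = k * (t+2) := by
          rw [Finset.sum_congr rfl (fun l hl => hallS l (Finset.mem_erase.mp hl).1)]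
          rw [Finset.sum_const, hcard, smul_eq_mul]
        have h4 := Finset.add_sum_erase univ z (mem_univ iw)
        have h5 : 1 ≤ z iw := by rcases hiw' with ⟨c, hc⟩; omega
        have hr3 : k * (t+2) = k * (t+1) + k := by ring
        rw [hSsum] at h4
        omega
      set y : Fin (k+1) → ℕ := fun j => if j = i then z j else z j - 1 with hydef
      have hyj : ∀ j, y j = if j = i then z j else z j - 1 := fun j => rfl
      have hsummove : (∑ j, y j) + k = ∑ j, z j := sum_move hpos hyj
      have hmove : MMove k z y := by
        refine ⟨i, hpos, fun _ => ⟨hieven, fun j hj => ?_⟩, fun hodd => ?_, hyj⟩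
        · have hjne : j ≠ iw := by
            intro h; rw [h] at hj
            exact absurd hj (Nat.not_even_iff_odd.mpr hiw')
          exact hminS j hjne
        · exact absurd hieven (Nat.not_even_iff_odd.mpr (hodd i))
      refine MVal.succ z y t hmove (ih y ⟨?_, ?_, ?_, ?_⟩)
      · omega
      · intro j
        rw [hyj j]; split
        · next h => subst h; omega
        · have := hcap j; omega
      · intro h
        exact absurd hte (Nat.not_even_iff_odd.mpr h)
      · intro _
        refine ⟨i, iw, hine, ?_, ?_, ?_⟩
        · show Even (y i)
          rw [hyj i, if_pos rfl]; exact hieven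
        · show Even (y iw)
          rw [hyj iw, if_neg (Ne.symm hine)]
          have h5 : 1 ≤ z iw := by rcases hiw' with ⟨c, hc⟩; omega
          exact (even_sub_one h5).mpr hiw'
        · intro l hl
          by_contra hcon
          push_neg at hcon
          obtain ⟨hl1, hl2⟩ := hcon
          rw [hyj l, if_neg hl1] at hl
          rw [even_sub_one (hpos l hl1)] at hl
          exact absurd (hothers l hl2) (Nat.not_even_iff_odd.mpr hl)
    · -- t odd, t+1 even: exactly two even coordinates; keep the min of the two
      obtain ⟨i0, j0, hij0, hei0, hej0, huniq⟩ := hE (by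
        rcases hto with ⟨c, hc⟩; exact ⟨c+1, by omega⟩)
      have key : ∀ i o : Fin (k+1), i ≠ o → Even (z i) → Even (z o) →
          (∀ l, Even (z l) → l = i ∨ l = o) → z i ≤ z o → MVal k z (t+1) := by
        intro i o hio hei heo huq hle
        have hodd' : ∀ l, l ≠ i → l ≠ o → Odd (z l) := by
          intro l h1 h2
          rcases Nat.even_or_odd (z l) with h | h
          · rcases huq l h with h' | h' <;> [exact absurd h' h1; exact absurd h' h2]
          · exact h
        have hpos : ∀ j, j ≠ i → 0 < z j := by
          intro j hj
          rcases Nat.eq_zero_or_pos (z j) with h0 | h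
          · exfalso
            by_cases hjo : j = o
            · subst hjo
              have hzi : z i = 0 := by omega
              have hb := sum_two_zero z (t+2) hcap hj h0 hzi
              rw [hsum] at hb
              omega
            · have := hodd' j hj hjo
              rcases this with ⟨c, hc⟩; omega
          · exact h
        have hzit : z i ≤ t + 1 := by
          have := hcap i
          rcases Nat.eq_or_lt_of_le this with h | h
          · exfalso
            rcases hei with ⟨c, hc⟩
            rcases hto with ⟨d, hd⟩
            omega
          · omega
        set y : Fin (k+1) → ℕ := fun j => if j = i then z j else z j - 1 with hydef
        have hyj : ∀ j, y j = if j = i then z j else z j - 1 := fun j => rfl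
        have hsummove : (∑ j, y j) + k = ∑ j, z j := sum_move hpos hyj
        have hmove : MMove k z y := by
          refine ⟨i, hpos, fun _ => ⟨hei, fun j hj => ?_⟩, fun hodd => ?_, hyj⟩
          · rcases huq j hj with h | h
            · rw [h]
            · rw [h]; exact hle
          · exact absurd hei (Nat.not_even_iff_odd.mpr (hodd i))
        have hone : o ≠ i := Ne.symm hio
        refine MVal.succ z y t hmove (ih y ⟨?_, ?_, ?_, ?_⟩)
        · omega
        · intro j
          rw [hyj j]; split
          · next h => subst h; omega
          · have := hcap j; omega
        · intro _
          refine ⟨o, ?_, ?_⟩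
          · show Odd (y o)
            rw [hyj o, if_neg hone]
            exact (odd_sub_one (hpos o hone)).mpr heo
          · intro l hl
            by_contra hlo
            by_cases hli : l = i
            · subst hli
              rw [hyj l, if_pos rfl] at hl
              exact absurd hei (Nat.not_even_iff_odd.mpr hl)
            · rw [hyj l, if_neg hli, odd_sub_one (hpos l hli)] at hl
              exact absurd hl (Nat.not_even_iff_odd.mpr (hodd' l hli hlo))
        · intro h
          exact absurd h (Nat.not_even_iff_odd.mpr hto)
      rcases le_total (z i0) (z j0) with h | h
      · exact key i0 j0 hij0 hei0 hej0 huniq h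
      · refine key j0 i0 (Ne.symm hij0) hej0 hei0 (fun l hl => (huniq l hl).symm) h

lemma L2 {k : ℕ} (hk : 2 ≤ k) {m : ℕ} (x : Fin (k+1) → ℕ)
    (hsum : (∑ i, x i) = k * m + k - 1) (hlt : ∀ i, x i < m) (hEm : Even m)
    (hodd : ∀ i, Odd (x i)) : MVal k x m := by
  have hm0 : m ≠ 0 := by
    intro h; subst h; exact absurd (hlt 0) (by omega)
  have hm1 : m - 1 + 1 = m := by omega
  have hOm1 : Odd (m - 1) := by
    rcases hEm with ⟨c, hc⟩
    exact ⟨c - 1, by omega⟩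
  obtain ⟨i, -, hmax⟩ := Finset.exists_max_image univ x ⟨0, mem_univ 0⟩
  replace hmax : ∀ j, x j ≤ x i := fun j => hmax j (mem_univ j)
  have hpos : ∀ j, j ≠ i → 0 < x j := by
    intro j _; rcases hodd j with ⟨c, hc⟩; omega
  set y : Fin (k+1) → ℕ := fun j => if j = i then x j else x j - 1 with hydef
  have hyj : ∀ j, y j = if j = i then x j else x j - 1 := fun j => rfl
  have hsummove : (∑ j, y j) + k = ∑ j, x j := sum_move hpos hyj
  have hmove : MMove k x y := by
    refine ⟨i, hpos, ?_, fun _ => fun j => hmax j, hyj⟩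
    rintro ⟨j, hj⟩
    exact absurd hj (Nat.not_even_iff_odd.mpr (hodd j))
  have hCC : CC k (m-1) y := by
    refine ⟨?_, ?_, ?_, ?_⟩
    · have hr : k * (m-1) + k = k * m := by
        conv_rhs => rw [← hm1]
        ring
      omega
    · intro j
      rw [hyj j]; split
      · next h => subst h; have := hlt j; omega
      · have := hlt j; omega
    · intro _
      refine ⟨i, ?_, ?_⟩
      · show Odd (y i)
        rw [hyj i, if_pos rfl]; exact hodd i
      · intro l hl
        by_contra hli
        rw [hyj l, if_neg hli, odd_sub_one (hpos l hli)] at hl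
        exact absurd hl (Nat.not_even_iff_odd.mpr (hodd l))
    · intro h
      exact absurd h (Nat.not_even_iff_odd.mpr hOm1)
  have := MVal.succ x y (m-1) hmove (CCval hk (m-1) y hCC)
  rwa [hm1] at this












lemma S3core {n : ℕ} (hn : 1 ≤ n) (u v : Fin n → ℕ)
    (h1 : ∀ j, v j ≤ u j) (h2 : ∀ j, u j ≤ v j + 1)
    (h3 : (∑ j, u j) = (∑ j, v j) + (n - 1)) :
    ∃ p, v p = u p ∧ ∀ j, j ≠ p → v j + 1 = u j := by
  have hd : ∑ j, (u j - v j) = n - 1 := by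
    rw [Finset.sum_tsub_distrib univ (fun j _ => h1 j)]
    omega
  have hd1 : ∀ j, u j - v j ≤ 1 := fun j => by have := h2 j; omega
  have hex : ∃ p, u p - v p = 0 := by
    by_contra hcon
    push_neg at hcon
    have hall : ∀ j, u j - v j = 1 := fun j => by have := hcon j; have := hd1 j; omega
    have : ∑ j : Fin n, (u j - v j) = n := by
      rw [Finset.sum_congr rfl (fun j _ => hall j)]
      simp [Finset.card_univ]
    omega
  obtain ⟨p, hp⟩ := hex
  refine ⟨p, by have := h1 p; omega, ?_⟩
  intro q hq
  by_contra hne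
  have hq0 : u q - v q = 0 := by have := h1 q; have := h2 q; omega
  have hsub : ∑ j, (u j - v j) = ∑ j ∈ (univ.erase p).erase q, (u j - v j) := by
    refine (Finset.sum_subset (Finset.subset_univ _) ?_).symm
    intro l _ hl
    simp only [Finset.mem_erase, Finset.mem_univ, and_true, not_and_or, not_not] at hl
    rcases hl with h | h
    · rw [h]; exact hq0
    · rw [h]; exact hp
  have hcard : ((univ.erase p).erase q).card = n - 2 := by
    rw [Finset.card_erase_of_mem (Finset.mem_erase.mpr ⟨hq, mem_univ q⟩),
      Finset.card_erase_of_mem (mem_univ p)]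
    simp only [Finset.card_univ, Fintype.card_fin]
    omega
  have hle : ∑ j ∈ (univ.erase p).erase q, (u j - v j) ≤ (n-2) * 1 := by
    calc ∑ j ∈ (univ.erase p).erase q, (u j - v j)
        ≤ ∑ _j ∈ (univ.erase p).erase q, 1 := Finset.sum_le_sum fun l _ => hd1 l
      _ = (n-2) * 1 := by rw [Finset.sum_const, hcard, smul_eq_mul]
  -- n ≥ 2 since p ≠ q
  have hn2 : 2 ≤ n := by
    by_contra hcon
    have hn1 : n = 1 := by omega
    subst hn1
    exact hq (Subsingleton.elim q p)
  omega

/-- Parity of the value at the fixed sorted position equals parity of the kept pile. -/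
lemma parity_fixed {k : ℕ} {x y : Fin (k+1) → ℕ} {i : Fin (k+1)}
    (hpos : ∀ j, j ≠ i → 0 < x j) (hyj : ∀ j, y j = if j = i then x j else x j - 1)
    {p : Fin (k+1)} (hp1 : srt y p = srt x p) (hp2 : ∀ j, j ≠ p → srt y j + 1 = srt x j) :
    (Even (x i) ↔ Even (srt x p)) := by
  classical
  set A : ℕ := ∑ j ∈ univ.erase i, (if Odd (x j) then 1 else 0) with hA
  set B : ℕ := ∑ j ∈ univ.erase p, (if Odd (srt x j) then 1 else 0) with hB
  have hFy : (∑ j, if Even (y j) then 1 else 0) = (if Even (x i) then 1 else 0) + A := by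
    rw [← Finset.add_sum_erase univ _ (mem_univ i)]
    congr 1
    · rw [hyj i, if_pos rfl]
    · refine Finset.sum_congr rfl ?_
      intro j hj
      have hji : j ≠ i := (Finset.mem_erase.mp hj).1
      rw [hyj j, if_neg hji]
      exact if_congr (even_sub_one (hpos j hji)) rfl rfl
  have hGx : (∑ j, if Odd (x j) then 1 else 0) = (if Odd (x i) then 1 else 0) + A :=
    (Finset.add_sum_erase univ _ (mem_univ i)).symm
  have hFsy : (∑ j, if Even (srt y j) then 1 else 0)
      = (if Even (srt x p) then 1 else 0) + B := by
    rw [← Finset.add_sum_erase univ _ (mem_univ p)]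
    congr 1
    · rw [hp1]
    · refine Finset.sum_congr rfl ?_
      intro j hj
      have hjp : j ≠ p := (Finset.mem_erase.mp hj).1
      refine if_congr ?_ rfl rfl
      have h := hp2 j hjp
      simp only [Nat.even_iff, Nat.odd_iff] at *
      omega
  have hGsx : (∑ j, if Odd (srt x j) then 1 else 0)
      = (if Odd (srt x p) then 1 else 0) + B :=
    (Finset.add_sum_erase univ _ (mem_univ p)).symm
  have htrF : (∑ j, if Even (srt y j) then 1 else 0) = (∑ j, if Even (y j) then 1 else 0) :=
    Equiv.sum_comp (Tuple.sort y) (fun l => if Even (y l) then 1 else 0)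
  have htrG : (∑ j, if Odd (srt x j) then 1 else 0) = (∑ j, if Odd (x j) then 1 else 0) :=
    Equiv.sum_comp (Tuple.sort x) (fun l => if Odd (x l) then 1 else 0)
  rw [hFy, hFsy] at htrF
  rw [hGx, hGsx] at htrG
  rcases Nat.even_or_odd (x i) with h1 | h1 <;> rcases Nat.even_or_odd (srt x p) with h2 | h2
  · exact ⟨fun _ => h2, fun _ => h1⟩
  · exfalso
    rw [if_pos h1, if_neg (Nat.not_even_iff_odd.mpr h2), if_pos h2,
        if_neg (Nat.not_odd_iff_even.mpr h1)] at *
    omega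
  · exfalso
    rw [if_pos h2, if_neg (Nat.not_even_iff_odd.mpr h1), if_pos h1,
        if_neg (Nat.not_odd_iff_even.mpr h2)] at *
    omega
  · constructor
    · intro hc; exact absurd hc (Nat.not_even_iff_odd.mpr h1)
    · intro hc; exact absurd hc (Nat.not_even_iff_odd.mpr h2)





lemma odd_add_two {a : ℕ} (h : Odd a) : Odd (a + 2) := by
  rcases h with ⟨c, hc⟩; exact ⟨c+1, by omega⟩

lemma sum_split_one {n : ℕ} (a : Fin n → ℕ) (p : Fin n) :
    ∑ j, a j = a p + ∑ j ∈ univ.erase p, a j :=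
  (Finset.add_sum_erase univ a (mem_univ p)).symm

lemma sum_split_two {n : ℕ} (a : Fin n → ℕ) {p e : Fin n} (hep : e ≠ p) :
    ∑ j, a j = a p + a e + ∑ j ∈ (univ.erase p).erase e, a j := by
  rw [sum_split_one a p, ← Finset.add_sum_erase (univ.erase p) a
    (Finset.mem_erase.mpr ⟨hep, mem_univ e⟩)]
  ring

lemma card_erase_one {n : ℕ} (p : Fin n) : (univ.erase p : Finset (Fin n)).card = n - 1 := by
  rw [Finset.card_erase_of_mem (mem_univ p)]
  simp [Finset.card_univ]

lemma card_erase_two {n : ℕ} {p e : Fin n} (hep : e ≠ p) :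
    ((univ.erase p).erase e : Finset (Fin n)).card = n - 2 := by
  rw [Finset.card_erase_of_mem (Finset.mem_erase.mpr ⟨hep, mem_univ e⟩), card_erase_one]
  omega

lemma sum_shift_erase {n : ℕ} (s a : Fin n → ℕ) (T : Finset (Fin n)) (c : ℕ)
    (h : ∀ j ∈ T, s j = a j + c) :
    ∑ j ∈ T, s j = (∑ j ∈ T, a j) + T.card * c := by
  rw [Finset.sum_congr rfl h, Finset.sum_add_distrib, Finset.sum_const, smul_eq_mul]

lemma pre_of_le {k : ℕ} {s x : Fin (k+1) → ℕ} (h : ∀ j, s j ≤ srt x j) :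
    ∀ j, srt s j ≤ srt x j := by
  intro j
  have h0 := srt_le_add s (srt x) 0 (fun j => by simpa using h j) j
  rw [srt_srt x] at h0
  simpa using h0

lemma L3 {k : ℕ} (hk : 2 ≤ k) {x : Fin (k+1) → ℕ} {m : ℕ} (h : MVal k x m) :
    ∃ r, RHS k m r ∧ ∀ j, srt r j ≤ srt x j := by
  induction h with
  | zero x h =>
    refine ⟨fun _ => 0, Or.inl ⟨by simp, fun _ => le_refl 0, fun _ _ => Even.zero,
      fun h0 => absurd h0 (by simp [Nat.odd_iff])⟩, ?_⟩
    intro j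
    simp [srt]
  | succ x y m hmv hM ih =>
    obtain ⟨r', hr', hpre'⟩ := ih
    obtain ⟨i, hpos, hev, hod, hyj⟩ := hmv
    set a := srt r' with hadef
    have hamono : Monotone a := srt_mono r'
    have hale : ∀ j, a j ≤ srt y j := hpre'
    have hRa : RHS k m a := (rhs_srt r').mpr hr'
    have hsummove : (∑ j, y j) + k = ∑ j, x j := sum_move hpos hyj
    have hsx : ∑ j, srt x j = ∑ j, x j := sum_srt x
    have hsy : ∑ j, srt y j = ∑ j, y j := sum_srt y
    have hsa : ∑ j, a j = ∑ j, r' j := sum_srt r'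
    have hyx : ∀ j, y j ≤ x j := fun j => by rw [hyj j]; split <;> omega
    have hxy : ∀ j, x j ≤ y j + 1 := by
      intro j; rw [hyj j]; split
      · omega
      · next hne => have := hpos j hne; omega
    have f1 : ∀ j, srt y j ≤ srt x j := srt_le y x hyx
    have f2 : ∀ j, srt x j ≤ srt y j + 1 := srt_le_add x y 1 hxy
    have f3 : (∑ j, srt x j) = (∑ j, srt y j) + ((k+1) - 1) := by omega
    obtain ⟨p, hp1, hp2⟩ := S3core (by omega) (srt x) (srt y)
      f1 f2 f3
    rcases hRa with ⟨haS, hacap, haE, haO⟩ | ⟨haS, halt, hmE, haodd⟩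
    · -- r' of type A
      rcases Nat.even_or_odd m with hm | hm
      · -- m even: bump everything except position p
        have hall : ∀ j, Even (a j) := haE hm
        set s : Fin (k+1) → ℕ := fun j => if j = p then a p else a j + 1 with hsdef
        have hsle : ∀ j, s j ≤ srt x j := by
          intro j
          show (if j = p then a p else a j + 1) ≤ srt x j
          split
          · next hh => rw [hh, ← hp1]; exact hale p
          · next hh => rw [← hp2 j hh]; exact Nat.add_le_add_right (hale j) 1
        have hssum : ∑ j, s j = (∑ j, a j) + k := by
          rw [sum_split_one s p, sum_split_one a p,
            sum_shift_erase s a (univ.erase p) 1 ?_, card_erase_one p]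
          · have : s p = a p := if_pos rfl
            omega
          · intro j hj
            show (if j = p then a p else a j + 1) = a j + 1
            rw [if_neg (Finset.mem_erase.mp hj).1]
        refine ⟨s, Or.inl ⟨?_, ?_, ?_, ?_⟩, pre_of_le hsle⟩
        · have hr : k*(m+1) = k*m + k := by ring
          omega
        · intro j
          show (if j = p then a p else a j + 1) ≤ m + 1
          split
          · exact le_trans (hacap p) (by omega)
          · exact Nat.add_le_add_right (hacap j) 1
        · intro hcon
          rcases Nat.even_add_one.mp hcon with h'
          exact absurd hm h'
        · intro _
          refine ⟨p, ?_, ?_⟩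
          · show Even (if p = p then a p else a p + 1)
            rw [if_pos rfl]; exact hall p
          · intro j hj
            by_contra hne
            have hj2 : Even (if j = p then a p else a j + 1) := hj
            rw [if_neg hne] at hj2
            rw [Nat.even_add_one] at hj2
            exact hj2 (hall j)
      · -- m odd: unique even coordinate e of a
        obtain ⟨e, hee, heu⟩ := haO hm
        have hee' : Even (a e) := hee
        have haodd' : ∀ j, j ≠ e → Odd (a j) := by
          intro j hj
          rcases Nat.even_or_odd (a j) with h' | h'
          · exact absurd (heu j h') hj
          · exact h'
        by_cases hc3 : p = e ∨ a p < srt y p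
        · -- C3: bump everything except e
          set s : Fin (k+1) → ℕ := fun j => if j = e then a e else a j + 1 with hsdef
          have hsle : ∀ j, s j ≤ srt x j := by
            intro j
            show (if j = e then a e else a j + 1) ≤ srt x j
            split
            · next hh => subst hh; exact le_trans (hale j) (f1 j)
            · next hh =>
              by_cases hjp : j = p
              · subst hjp
                rcases hc3 with h' | h'
                · exact absurd h' hh
                · rw [← hp1]; omega
              · rw [← hp2 j hjp]
                exact Nat.add_le_add_right (hale j) 1
          have hssum : ∑ j, s j = (∑ j, a j) + k := by
            rw [sum_split_one s e, sum_split_one a e,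
              sum_shift_erase s a (univ.erase e) 1 ?_, card_erase_one e]
            · have : s e = a e := if_pos rfl
              omega
            · intro j hj
              show (if j = e then a e else a j + 1) = a j + 1
              rw [if_neg (Finset.mem_erase.mp hj).1]
          refine ⟨s, Or.inl ⟨?_, ?_, ?_, ?_⟩, pre_of_le hsle⟩
          · have hr : k*(m+1) = k*m + k := by ring
            omega
          · intro j
            show (if j = e then a e else a j + 1) ≤ m + 1
            split
            · exact le_trans (hacap e) (by omega)
            · exact Nat.add_le_add_right (hacap j) 1
          · intro _
            intro j
            show Even (if j = e then a e else a j + 1)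
            split
            · exact hee'
            · next hh => exact Odd.add_one (haodd' j hh)
          · intro hcon
            exfalso
            rcases hm with ⟨c, hc⟩; rcases hcon with ⟨d, hd⟩; omega
        · push_neg at hc3
          obtain ⟨hpe, hple⟩ := hc3
          have hape : a p = srt y p := le_antisymm (hale p) hple
          have hapodd : Odd (a p) := haodd' p hpe
          by_cases hc4 : a e < srt y e
          · -- C4: s p = a p - 1, s e = a e + 2, others +1
            have hep : e ≠ p := Ne.symm hpe
            set s : Fin (k+1) → ℕ :=
              fun j => if j = p then a p - 1 else if j = e then a e + 2 else a j + 1 with hsdef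
            have hap1 : 1 ≤ a p := by rcases hapodd with ⟨c, hc⟩; omega
            have hsle : ∀ j, s j ≤ srt x j := by
              intro j
              show (if j = p then a p - 1 else if j = e then a e + 2 else a j + 1) ≤ srt x j
              split
              · next hh => subst hh; rw [← hp1, ← hape]; omega
              · next hh =>
                split
                · next hh2 =>
                  subst hh2
                  rw [← hp2 j hh]
                  omega
                · next hh2 =>
                  by_cases hjp : j = p
                  · exact absurd hjp hh
                  · rw [← hp2 j hjp]
                    exact Nat.add_le_add_right (hale j) 1
            have hssum : ∑ j, s j = (∑ j, a j) + k := by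
              rw [sum_split_two s hep, sum_split_two a hep,
                sum_shift_erase s a ((univ.erase p).erase e) 1 ?_, card_erase_two hep]
              · have h1 : s p = a p - 1 := if_pos rfl
                have h2 : s e = a e + 2 := by
                  show (if e = p then a p - 1 else if e = e then a e + 2 else a e + 1) = a e + 2
                  rw [if_neg hep, if_pos rfl]
                omega
              · intro j hj
                have hj1 : j ≠ e := (Finset.mem_erase.mp hj).1
                have hj2 : j ≠ p := (Finset.mem_erase.mp (Finset.mem_erase.mp hj).2).1
                show (if j = p then a p - 1 else if j = e then a e + 2 else a j + 1) = a j + 1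
                rw [if_neg hj2, if_neg hj1]
            refine ⟨s, Or.inl ⟨?_, ?_, ?_, ?_⟩, pre_of_le hsle⟩
            · have hr : k*(m+1) = k*m + k := by ring
              omega
            · intro j
              show (if j = p then a p - 1 else if j = e then a e + 2 else a j + 1) ≤ m + 1
              have h1 := hacap p
              have h2 := hacap e
              have h3 := hacap j
              have haem : a e ≠ m := by
                intro hcon
                rw [hcon] at hee'
                exact absurd hm (Nat.not_odd_iff_even.mpr hee')
              split
              · omega
              · split
                · omega
                · omega
            · intro _
              intro j
              show Even (if j = p then a p - 1 else if j = e then a e + 2 else a j + 1)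
              split
              · exact (even_sub_one hap1).mpr hapodd
              · split
                · exact hee'.add (by decide)
                · next h1 h2 => exact Odd.add_one (haodd' j h2)
            · intro hcon
              exfalso
              rcases hm with ⟨c, hc⟩; rcases hcon with ⟨d, hd⟩; omega
          · -- C5: exceptional lift
            have haee : a e = srt y e := le_antisymm (hale e) (not_lt.mp hc4)
            have hep : e ≠ p := Ne.symm hpe
            -- x is all odd
            have hallodd : ∀ j, Odd (x j) := by
              by_contra hcon
              push_neg at hcon
              obtain ⟨j0, hj0⟩ := hcon
              have hxj0 : Even (x j0) := Nat.not_odd_iff_even.mp hj0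
              obtain ⟨hxie, -⟩ := hev ⟨j0, hxj0⟩
              have := (parity_fixed hpos hyj hp1 hp2).mp hxie
              rw [← hp1, ← hape] at this
              exact absurd (heu p this) hpe
            have hsxodd : ∀ j, Odd (srt x j) := fun j => hallodd _
            have hmax : ∀ j, x j ≤ x i := hod hallodd
            have hsxle : ∀ j, srt x j ≤ x i := fun j => hmax _
            -- srt y p = x i
            have hsyp : srt y p = x i := by
              have hoddp : Odd (srt y p) := by rw [hp1]; exact hsxodd p
              show y (Tuple.sort y p) = x i
              have : srt y p = y (Tuple.sort y p) := rfl
              by_cases hli : Tuple.sort y p = i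
              · rw [hyj (Tuple.sort y p), if_pos hli, hli]
              · exfalso
                have h1 : y (Tuple.sort y p) = x (Tuple.sort y p) - 1 := by
                  rw [hyj _, if_neg hli]
                have h2 : Odd (x (Tuple.sort y p)) := hallodd _
                have h3 : 0 < x (Tuple.sort y p) := by rcases h2 with ⟨c, hc⟩; omega
                have h4 : Even (y (Tuple.sort y p)) := by
                  rw [h1]
                  exact (even_sub_one h3).mpr h2
                rw [this] at hoddp
                exact absurd h4 (Nat.not_even_iff_odd.mpr hoddp)
            have hap : a p = x i := by rw [hape, hsyp]
            -- for j ∉ {p, e}: a j + 2 ≤ srt x j and a j + 2 ≤ m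
            have hkey : ∀ j, j ≠ p → j ≠ e → a j + 2 ≤ srt x j ∧ a j + 2 ≤ m := by
              intro j hjp hje
              have h1 : a j ≤ srt y j := hale j
              have h2 : srt y j + 1 = srt x j := hp2 j hjp
              have h3 : Even (srt y j) := by
                have := hsxodd j
                rw [← h2] at this
                rcases Nat.even_or_odd (srt y j) with h' | h'
                · exact h'
                · exfalso
                  rcases this with ⟨c, hc⟩; rcases h' with ⟨d, hd⟩; omega
              have h4 : Odd (a j) := haodd' j hje
              have h5 : a j ≠ srt y j := by
                intro hcon
                rw [hcon] at h4
                exact absurd h3 (Nat.not_even_iff_odd.mpr h4)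
              have h6 : srt x j ≤ x i := hsxle j
              have h7 : a p ≤ m := hacap p
              constructor
              · omega
              · omega
            set s : Fin (k+1) → ℕ :=
              fun j => if j = p then a p else if j = e then a e + 1 else a j + 2 with hsdef
            have hsle : ∀ j, s j ≤ srt x j := by
              intro j
              show (if j = p then a p else if j = e then a e + 1 else a j + 2) ≤ srt x j
              split
              · next hh => subst hh; rw [hape, hp1]
              · next hh =>
                split
                · next hh2 =>
                  subst hh2
                  rw [← hp2 j hh, haee]
                · next hh2 => exact (hkey j hh hh2).1
            have hssum : ∑ j, s j = (∑ j, a j) + (2*k - 1) := by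
              rw [sum_split_two s hep, sum_split_two a hep,
                sum_shift_erase s a ((univ.erase p).erase e) 2 ?_, card_erase_two hep]
              · have h1 : s p = a p := if_pos rfl
                have h2 : s e = a e + 1 := by
                  show (if e = p then a p else if e = e then a e + 1 else a e + 2) = a e + 1
                  rw [if_neg hep, if_pos rfl]
                omega
              · intro j hj
                have hj1 : j ≠ e := (Finset.mem_erase.mp hj).1
                have hj2 : j ≠ p := (Finset.mem_erase.mp (Finset.mem_erase.mp hj).2).1
                show (if j = p then a p else if j = e then a e + 1 else a j + 2) = a j + 2
                rw [if_neg hj2, if_neg hj1]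
            refine ⟨s, Or.inr ⟨?_, ?_, ?_, ?_⟩, pre_of_le hsle⟩
            · have hr : k*(m+1) = k*m + k := by ring
              omega
            · intro j
              show (if j = p then a p else if j = e then a e + 1 else a j + 2) < m + 1
              have h1 := hacap p
              have h2 := hacap e
              have haem : a e ≠ m := by
                intro hcon
                rw [hcon] at hee'
                exact absurd hm (Nat.not_odd_iff_even.mpr hee')
              split
              · omega
              · split
                · omega
                · next hh hh2 => have := (hkey j hh hh2).2; omega
            · exact Odd.add_one hm
            · intro j
              show Odd (if j = p then a p else if j = e then a e + 1 else a j + 2)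
              split
              · exact hapodd
              · split
                · exact Even.add_one hee'
                · next hh hh2 => exact odd_add_two (haodd' j hh2)
    · -- r' of type B: add one to a single coordinate ≠ p
      obtain ⟨q, hq⟩ := exists_ne hk p
      set s : Fin (k+1) → ℕ := fun j => if j = q then a q + 1 else a j with hsdef
      have hsle : ∀ j, s j ≤ srt x j := by
        intro j
        show (if j = q then a q + 1 else a j) ≤ srt x j
        split
        · next hh => subst hh; rw [← hp2 j hq]; exact Nat.add_le_add_right (hale j) 1
        · exact le_trans (hale j) (f1 j)
      have hssum : ∑ j, s j = (∑ j, a j) + 1 := by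
        rw [sum_split_one s q, sum_split_one a q,
          sum_shift_erase s a (univ.erase q) 0 ?_]
        · have : s q = a q + 1 := if_pos rfl
          omega
        · intro j hj
          show (if j = q then a q + 1 else a j) = a j + 0
          rw [if_neg (Finset.mem_erase.mp hj).1]
          omega
      have hm1 : Odd (m+1) := Even.add_one hmE
      refine ⟨s, Or.inl ⟨?_, ?_, ?_, ?_⟩, pre_of_le hsle⟩
      · have hr : k*(m+1) = k*m + k := by ring
        have hk1 : 1 ≤ k := by omega
        omega
      · intro j
        show (if j = q then a q + 1 else a j) ≤ m + 1
        have h1 := halt q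
        have h2 := halt j
        split <;> omega
      · intro hcon
        exact absurd hcon (Nat.not_even_iff_odd.mpr hm1)
      · intro _
        refine ⟨q, ?_, ?_⟩
        · show Even (if q = q then a q + 1 else a q)
          rw [if_pos rfl]
          exact Odd.add_one (haodd q)
        · intro j hj
          by_contra hne
          have hj2 : Even (if j = q then a q + 1 else a j) := hj
          rw [if_neg hne] at hj2
          exact absurd hj2 (Nat.not_even_iff_odd.mpr (haodd j))



lemma rhs_le_eq {k m : ℕ} (hk : 2 ≤ k) {r x : Fin (k+1) → ℕ}
    (hr : RHS k m r) (hx : RHS k m x) (hle : ∀ j, srt r j ≤ srt x j) :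
    ∀ j, srt r j = srt x j := by
  have hsr : ∑ j, srt r j = ∑ j, r j := sum_srt r
  have hsx : ∑ j, srt x j = ∑ j, x j := sum_srt x
  have hsums : ∑ j, srt r j = ∑ j, srt x j := by
    rcases hr with ⟨hr1, -, hrE, -⟩ | ⟨hr1, -, hrEm, hrodd⟩ <;>
      rcases hx with ⟨hx1, -, hxE, -⟩ | ⟨hx1, -, hxEm, hxodd⟩
    · omega
    · -- r type A, x type B : contradiction via parity
      exfalso
      have hre : ∀ j, Even (srt r j) := fun j => hrE hxEm _
      have hxo : ∀ j, Odd (srt x j) := fun j => hxodd _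
      have hpt : ∀ j, srt r j + 1 ≤ srt x j := by
        intro j
        have h1 := hle j
        have h2 : srt r j ≠ srt x j := by
          intro hcon
          have := hre j
          rw [hcon] at this
          exact absurd this (Nat.not_even_iff_odd.mpr (hxo j))
        omega
      have hsum2 : ∑ j : Fin (k+1), (srt r j + 1) ≤ ∑ j, srt x j :=
        Finset.sum_le_sum fun j _ => hpt j
      rw [Finset.sum_add_distrib, Finset.sum_const, Finset.card_univ] at hsum2
      simp only [Fintype.card_fin, smul_eq_mul, mul_one] at hsum2
      omega
    · -- r type B, x type A : sums contradict
      exfalso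
      have : ∑ j, srt r j ≤ ∑ j, srt x j := Finset.sum_le_sum fun j _ => hle j
      omega
    · omega
  intro j
  by_contra hne
  have hlt : srt r j < srt x j := lt_of_le_of_ne (hle j) hne
  have : ∑ l, srt r l < ∑ l, srt x l :=
    Finset.sum_lt_sum (fun l _ => hle l) ⟨j, mem_univ j, hlt⟩
  omega

lemma rhs_mval {k m : ℕ} (hk : 2 ≤ k) {x : Fin (k+1) → ℕ} (h : RHS k m x) : MVal k x m := by
  rcases h with ⟨h1, h2, h3, h4⟩ | ⟨h1, h2, h3, h4⟩
  · exact L1 hk m x h1 h2 h3 h4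
  · exact L2 hk x h1 h2 h3 h4

theorem stmt19' (k : ℕ) (hk : 2 ≤ k) (x : Fin (k+1) → ℕ) (m : ℕ) :
    (MVal k x m ∧ ∀ y, MVal k y m → ¬ (Pre k y x ∧ ¬ Pre k x y)) ↔ RHS k m x := by
  constructor
  · rintro ⟨hM, hmin⟩
    obtain ⟨r, hr, hle⟩ := L3 hk hM
    have hMr : MVal k r m := rhs_mval hk hr
    have hpre_rx : Pre k r x := hle
    have hxr : Pre k x r := by
      by_contra hcon
      exact (hmin r hMr) ⟨hpre_rx, hcon⟩
    have heq : srt r = srt x := funext (fun j => le_antisymm (hle j) (hxr j))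
    exact rhs_of_srt_eq heq hr
  · intro hx
    refine ⟨rhs_mval hk hx, ?_⟩
    rintro y hMy ⟨hyx, hnxy⟩
    apply hnxy
    obtain ⟨r, hr, hry⟩ := L3 hk hMy
    have hyx' : ∀ j, srt y j ≤ srt x j := hyx
    have hrx : ∀ j, srt r j ≤ srt x j := fun j => le_trans (hry j) (hyx' j)
    have heq := rhs_le_eq hk hr hx hrx
    intro j
    calc srt x j = srt r j := (heq j).symm
      _ ≤ srt y j := hry j


end S19
end Stmt19Proof

theorem stmt19 (k : ℕ) (hk : 2 ≤ k) (x : Fin (k+1) → ℕ) (m : ℕ) :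
    (MVal k x m ∧ ∀ y, MVal k y m → ¬ (Pre k y x ∧ ¬ Pre k x y)) ↔
    (((∑ i, x i) = k * m ∧ (∀ i, x i ≤ m) ∧
        (Even m → ∀ i, Even (x i)) ∧ (Odd m → ∃! i, Even (x i))) ∨
     ((∑ i, x i) = k * m + k - 1 ∧ (∀ i, x i < m) ∧ Even m ∧ ∀ i, Odd (x i))) :=
  S19.stmt19' k hk x m
end
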